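/- arXiv:2307.03431 — 7 statements merged into one kernel-verified Lean document; each statement's English description precedes it below -/
import Mathlib

section
/- For every d ≥ 3 there exist a strictly positive d×d density matrix ρ and d×d real symmetric matrices A, B such that no d×d real symmetric matrix C satisfies [[A,B],ρ] = ρ∘C, where [X,Y] := XY − YX. -/
open Matrix
open scoped ComplexOrder

noncomputable section

/-- The symmetrized (Jordan) product `A∘B := (AB+BA)/2`. -/
def jprod {d : ℕ} (A B : Matrix (Fin d) (Fin d) ℂ) : Matrix (Fin d) (Fin d) ℂ :=
  (1/2 : ℂ) • (A * B + B * A)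

/-- The commutator `[X,Y] := XY − YX`. -/
def mcomm {d : ℕ} (X Y : Matrix (Fin d) (Fin d) ℂ) : Matrix (Fin d) (Fin d) ℂ :=
  X * Y - Y * X

/-- A real symmetric matrix: a Hermitian matrix all of whose entries are real. -/
def IsRealSymm {d : ℕ} (A : Matrix (Fin d) (Fin d) ℂ) : Prop :=
  A.IsHermitian ∧ ∀ i j, (A i j).im = 0

namespace RDNI

open Complex

/-- Embed a 3×3 complex matrix into the top-left corner of a d×d matrix. -/
def emb (d : ℕ) (X : Matrix (Fin 3) (Fin 3) ℂ) : Matrix (Fin d) (Fin d) ℂ :=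
  fun i j => if h : i.val < 3 ∧ j.val < 3 then X ⟨i.val, h.1⟩ ⟨j.val, h.2⟩ else 0

def A3 : Matrix (Fin 3) (Fin 3) ℂ := !![0, 0, 1; 0, 0, 0; 1, 0, -1]
def B3 : Matrix (Fin 3) (Fin 3) ℂ := !![0, 0, 1; 0, 0, -1; 1, -1, 0]
def K3 : Matrix (Fin 3) (Fin 3) ℂ := !![0, -1, 1; 1, 0, -1; -1, 1, 0]
def N3 : Matrix (Fin 3) (Fin 3) ℂ := !![1, -I, 0; I, 1, 0; 0, 0, 0]
def M3 : Matrix (Fin 3) (Fin 3) ℂ := !![0, 0, -1 - I; 0, 0, 1 - I; -1 + I, 1 + I, 0]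

variable {d : ℕ}

lemma emb_apply_castLE (hd : 3 ≤ d) (X : Matrix (Fin 3) (Fin 3) ℂ) (a b : Fin 3) :
    emb d X (Fin.castLE hd a) (Fin.castLE hd b) = X a b := by
  have ha : (Fin.castLE hd a).val < 3 := a.isLt
  have hb : (Fin.castLE hd b).val < 3 := b.isLt
  simp only [emb, dif_pos (And.intro ha hb)]
  rfl

lemma emb_apply_left (X : Matrix (Fin 3) (Fin 3) ℂ) {i : Fin d} (hi : ¬ i.val < 3)
    (j : Fin d) : emb d X i j = 0 := by
  simp only [emb]; rw [dif_neg]; tauto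

lemma emb_apply_right (X : Matrix (Fin 3) (Fin 3) ℂ) (i : Fin d) {j : Fin d}
    (hj : ¬ j.val < 3) : emb d X i j = 0 := by
  simp only [emb]; rw [dif_neg]; tauto

lemma sum3 (hd : 3 ≤ d) (g : Fin d → ℂ) (hg : ∀ k : Fin d, ¬ k.val < 3 → g k = 0) :
    ∑ k, g k = g (Fin.castLE hd 0) + g (Fin.castLE hd 1) + g (Fin.castLE hd 2) := by
  have h01 : (Fin.castLE hd 0) ≠ (Fin.castLE hd 1) := by simp [Fin.ext_iff]
  have h02 : (Fin.castLE hd 0) ≠ (Fin.castLE hd 2) := by simp [Fin.ext_iff]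
  have h12 : (Fin.castLE hd 1) ≠ (Fin.castLE hd 2) := by simp [Fin.ext_iff]
  have key : ∑ k, g k =
      ∑ k ∈ ({Fin.castLE hd 0, Fin.castLE hd 1, Fin.castLE hd 2} : Finset (Fin d)), g k := by
    symm
    apply Finset.sum_subset (Finset.subset_univ _)
    intro x _ hx
    apply hg
    intro hlt
    apply hx
    have : x.val = 0 ∨ x.val = 1 ∨ x.val = 2 := by omega
    simp only [Finset.mem_insert, Finset.mem_singleton, Fin.ext_iff]
    simpa using this
  rw [key, Finset.sum_insert (by simp [h01, h02]),
    Finset.sum_insert (by simp [h12]), Finset.sum_singleton, add_assoc]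

lemma emb_mul (hd : 3 ≤ d) (X Y : Matrix (Fin 3) (Fin 3) ℂ) :
    emb d X * emb d Y = emb d (X * Y) := by
  ext i j
  by_cases hi : i.val < 3
  · by_cases hj : j.val < 3
    · have hi' : i = Fin.castLE hd ⟨i.val, hi⟩ := Fin.ext rfl
      have hj' : j = Fin.castLE hd ⟨j.val, hj⟩ := Fin.ext rfl
      rw [hi', hj', Matrix.mul_apply,
        sum3 hd _ (fun k hk => by rw [emb_apply_right X _ hk, zero_mul]),
        emb_apply_castLE hd (X * Y), Matrix.mul_apply, Fin.sum_univ_three]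
      simp only [emb_apply_castLE hd]
    · rw [Matrix.mul_apply, emb_apply_right (X*Y) _ hj,
        Finset.sum_eq_zero (fun k _ => by rw [emb_apply_right Y _ hj, mul_zero])]
  · rw [Matrix.mul_apply, emb_apply_left (X*Y) hi,
      Finset.sum_eq_zero (fun k _ => by rw [emb_apply_left X hi, zero_mul])]

lemma emb_sub (X Y : Matrix (Fin 3) (Fin 3) ℂ) :
    emb d X - emb d Y = emb d (X - Y) := by
  ext i j
  simp only [Matrix.sub_apply, emb]
  split <;> simp

lemma emb_isHermitian {X : Matrix (Fin 3) (Fin 3) ℂ} (hX : X.IsHermitian) :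
    (emb d X).IsHermitian := by
  ext i j
  simp only [Matrix.conjTranspose_apply, emb]
  by_cases hi : i.val < 3 <;> by_cases hj : j.val < 3
  · rw [dif_pos ⟨hj, hi⟩, dif_pos ⟨hi, hj⟩, ← Matrix.conjTranspose_apply, hX]
  · rw [dif_neg (by tauto), dif_neg (by tauto), star_zero]
  · rw [dif_neg (by tauto), dif_neg (by tauto), star_zero]
  · rw [dif_neg (by tauto), dif_neg (by tauto), star_zero]

lemma emb_isRealSymm {X : Matrix (Fin 3) (Fin 3) ℂ} (hX : X.IsHermitian)
    (him : ∀ a b, (X a b).im = 0) : IsRealSymm (emb d X) := by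
  refine ⟨emb_isHermitian hX, fun i j => ?_⟩
  simp only [emb]
  split
  · exact him _ _
  · simp

lemma N3_isHermitian : N3.IsHermitian := by
  ext i j
  fin_cases i <;> fin_cases j <;>
    simp [N3, Matrix.conjTranspose_apply, Matrix.vecHead, Matrix.vecTail]

lemma A3_isHermitian : A3.IsHermitian := by
  ext i j
  fin_cases i <;> fin_cases j <;>
    simp [A3, Matrix.conjTranspose_apply, Matrix.vecHead, Matrix.vecTail]

lemma B3_isHermitian : B3.IsHermitian := by
  ext i j
  fin_cases i <;> fin_cases j <;>
    simp [B3, Matrix.conjTranspose_apply, Matrix.vecHead, Matrix.vecTail]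

lemma A3_im (a b : Fin 3) : (A3 a b).im = 0 := by
  fin_cases a <;> fin_cases b <;> simp [A3, Matrix.vecHead, Matrix.vecTail]

lemma B3_im (a b : Fin 3) : (B3 a b).im = 0 := by
  fin_cases a <;> fin_cases b <;> simp [B3, Matrix.vecHead, Matrix.vecTail]

lemma K3_eq : A3 * B3 - B3 * A3 = K3 := by
  ext a b
  fin_cases a <;> fin_cases b <;>
    simp [A3, B3, K3, Matrix.mul_apply, Fin.sum_univ_three,
      Matrix.vecHead, Matrix.vecTail] <;> ring

lemma M3_eq : K3 * N3 - N3 * K3 = M3 := by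
  ext a b
  fin_cases a <;> fin_cases b <;>
    simp [K3, N3, M3, Matrix.mul_apply, Fin.sum_univ_three,
      Matrix.vecHead, Matrix.vecTail] <;> ring

lemma W_posSemidef (hd : 3 ≤ d) : (emb d N3).PosSemidef := by
  refine Matrix.PosSemidef.of_dotProduct_mulVec_nonneg (emb_isHermitian N3_isHermitian) fun x => ?_
  set z : ℂ := x (Fin.castLE hd 0) - I * x (Fin.castLE hd 1) with hz
  have hmv : ∀ i : Fin d, ¬ i.val < 3 → (emb d N3 *ᵥ x) i = 0 := by
    intro i hi
    simp only [Matrix.mulVec, dotProduct]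
    exact Finset.sum_eq_zero fun k _ => by rw [emb_apply_left N3 hi, zero_mul]
  have hquad : star x ⬝ᵥ (emb d N3 *ᵥ x) = star z * z := by
    rw [dotProduct, sum3 hd _ (fun k hk => by rw [hmv k hk, mul_zero])]
    have hrow : ∀ a : Fin 3, (emb d N3 *ᵥ x) (Fin.castLE hd a) =
        N3 a 0 * x (Fin.castLE hd 0) + N3 a 1 * x (Fin.castLE hd 1) +
          N3 a 2 * x (Fin.castLE hd 2) := by
      intro a
      rw [Matrix.mulVec, dotProduct,
        sum3 hd _ (fun k hk => by rw [emb_apply_right N3 _ hk, zero_mul])]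
      simp only [emb_apply_castLE hd]
    rw [hrow 0, hrow 1, hrow 2]
    simp [N3, hz, Matrix.vecHead, Matrix.vecTail, Complex.star_def, map_sub, _root_.map_mul,
      Complex.conj_I]
    ring_nf
    simp [Complex.I_sq]
  rw [hquad]
  exact star_mul_self_nonneg z

lemma smul_posDef {M : Matrix (Fin d) (Fin d) ℂ} (hM : M.PosDef) {r : ℝ} (hr : 0 < r) :
    (((r : ℂ)) • M).PosDef := by
  refine Matrix.posDef_iff_dotProduct_mulVec.mpr ⟨?_, ?_⟩
  · unfold Matrix.IsHermitian
    rw [Matrix.conjTranspose_smul, hM.1]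
    congr 1
    simp [Complex.star_def]
  · intro x hx
    have h := hM.dotProduct_mulVec_pos hx
    rw [Matrix.smul_mulVec, dotProduct_smul, smul_eq_mul]
    rw [Complex.lt_def] at h ⊢
    obtain ⟨h1, h2⟩ := h
    constructor
    · simp only [Complex.mul_re, Complex.ofReal_re, Complex.ofReal_im, Complex.zero_re] at *
      nlinarith
    · simp only [Complex.mul_im, Complex.ofReal_re, Complex.ofReal_im, Complex.zero_im] at *
      nlinarith

lemma mcomm_smul_right (X Y : Matrix (Fin d) (Fin d) ℂ) (s : ℂ) :
    mcomm X (s • Y) = s • mcomm X Y := by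
  unfold mcomm
  rw [mul_smul_comm, smul_mul_assoc, smul_sub]

lemma jprod_smul_left (Y C : Matrix (Fin d) (Fin d) ℂ) (s : ℂ) :
    jprod (s • Y) C = s • jprod Y C := by
  unfold jprod
  rw [smul_mul_assoc, mul_smul_comm, ← smul_add, smul_comm]

lemma mcomm_one_add (K W : Matrix (Fin d) (Fin d) ℂ) :
    mcomm K (1 + W) = K * W - W * K := by
  unfold mcomm
  rw [mul_add, add_mul, mul_one, one_mul]
  abel

end RDNI

open RDNI Complex in
/-- For every `d ≥ 3` there are a strictly positive `d×d` density matrix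
`ρ` and real symmetric `A`, `B` such that no real symmetric `C` satisfies
`[[A,B],ρ] = ρ∘C`. -/
theorem real_distribution_not_involutive (d : ℕ) (hd : 3 ≤ d) :
    ∃ ρ A B : Matrix (Fin d) (Fin d) ℂ,
      ρ.PosDef ∧ ρ.trace = 1 ∧ IsRealSymm A ∧ IsRealSymm B ∧
      ¬ ∃ C : Matrix (Fin d) (Fin d) ℂ, IsRealSymm C ∧ mcomm (mcomm A B) ρ = jprod ρ C := by
  set W : Matrix (Fin d) (Fin d) ℂ := emb d N3 with hW
  set r : ℝ := ((d : ℝ) + 2)⁻¹ with hr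
  have hdpos : (0 : ℝ) < (d : ℝ) + 2 := by positivity
  have hrpos : 0 < r := by positivity
  have hr0 : ((r : ℂ)) ≠ 0 := by
    simp only [ne_eq, Complex.ofReal_eq_zero]
    positivity
  refine ⟨(r : ℂ) • (1 + W), emb d A3, emb d B3, ?_, ?_, ?_, ?_, ?_⟩
  · exact smul_posDef (Matrix.PosDef.one.add_posSemidef (W_posSemidef hd)) hrpos
  · -- trace
    have htrW : W.trace = 2 := by
      rw [Matrix.trace]
      rw [sum3 hd _ (fun k hk => by
        simpa using emb_apply_left (d := d) N3 hk k)]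
      simp only [Matrix.diag_apply, hW, emb_apply_castLE hd]
      norm_num [N3, Matrix.vecHead, Matrix.vecTail]
      rfl
    rw [Matrix.trace_smul, Matrix.trace_add, Matrix.trace_one, htrW]
    simp only [smul_eq_mul]
    rw [hr]
    push_cast
    rw [Fintype.card_fin]
    have : ((d : ℂ) + 2) ≠ 0 := by
      intro h
      have := congrArg Complex.re h
      push_cast at this
      linarith
    field_simp
  · exact emb_isRealSymm A3_isHermitian A3_im
  · exact emb_isRealSymm B3_isHermitian B3_im
  · rintro ⟨C, ⟨hCherm, hCim⟩, heq⟩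
    -- remove the scalar factor
    have h1 : mcomm (mcomm (emb d A3) (emb d B3)) (1 + W) = jprod (1 + W) C := by
      apply smul_right_injective (Matrix (Fin d) (Fin d) ℂ) hr0
      simpa only [mcomm_smul_right, jprod_smul_left] using heq
    -- LHS is emb M3
    have hK : mcomm (emb d A3) (emb d B3) = emb d K3 := by
      unfold mcomm
      rw [emb_mul hd, emb_mul hd, emb_sub, K3_eq]
    have hLHS : mcomm (mcomm (emb d A3) (emb d B3)) (1 + W) = emb d M3 := by
      rw [hK, mcomm_one_add, hW, emb_mul hd, emb_mul hd, emb_sub, M3_eq]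
    have h2 : emb d M3 = jprod (1 + W) C := hLHS ▸ h1
    -- unfold jprod on matrices
    have h3 : emb d M3 = (1/2 : ℂ) • (C + W * C + (C + C * W)) := by
      rw [h2]
      unfold jprod
      rw [add_mul, one_mul, mul_add, mul_one]
    set c0 : Fin d := Fin.castLE hd 0
    set c1 : Fin d := Fin.castLE hd 1
    set c2 : Fin d := Fin.castLE hd 2
    have hWC : ∀ a : Fin 3, (W * C) (Fin.castLE hd a) c2 =
        N3 a 0 * C c0 c2 + N3 a 1 * C c1 c2 + N3 a 2 * C c2 c2 := by
      intro a
      rw [Matrix.mul_apply,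
        sum3 hd _ (fun k hk => by rw [hW, emb_apply_right N3 _ hk, zero_mul])]
      simp only [hW, c0, c1, c2, emb_apply_castLE hd]
    have hCW : ∀ a : Fin 3, (C * W) (Fin.castLE hd a) c2 =
        C (Fin.castLE hd a) c0 * N3 0 2 + C (Fin.castLE hd a) c1 * N3 1 2 +
          C (Fin.castLE hd a) c2 * N3 2 2 := by
      intro a
      rw [Matrix.mul_apply,
        sum3 hd _ (fun k hk => by rw [hW, emb_apply_left N3 hk, mul_zero])]
      simp only [hW, c0, c1, c2, emb_apply_castLE hd]
    have E1 := congrFun (congrFun h3 c0) c2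
    have E2 := congrFun (congrFun h3 c1) c2
    rw [Matrix.smul_apply, Matrix.add_apply, Matrix.add_apply, Matrix.add_apply,
      hWC 0, hCW 0] at E1
    rw [Matrix.smul_apply, Matrix.add_apply, Matrix.add_apply, Matrix.add_apply,
      hWC 1, hCW 1] at E2
    rw [emb_apply_castLE hd] at E1 E2
    set x : ℝ := (C c0 c2).re with hx
    set y : ℝ := (C c1 c2).re with hy
    have hC02 : C c0 c2 = (x : ℝ) := by
      apply Complex.ext
      · simp [hx]
      · simp [hCim]
    have hC12 : C c1 c2 = (y : ℝ) := by
      apply Complex.ext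
      · simp [hy]
      · simp [hCim]
    rw [hC02, hC12] at E1 E2
    simp only [M3, N3, Matrix.cons_val', Matrix.cons_val_zero, Matrix.cons_val_one,
      Matrix.head_cons, Matrix.empty_val', Matrix.cons_val_fin_one,
      Matrix.cons_val_two, Matrix.tail_cons, Matrix.head_fin_const] at E1 E2
    have e1 := congrArg Complex.im E1
    have e2 := congrArg Complex.re E2
    simp [Complex.add_im, Complex.add_re, Complex.mul_im, Complex.mul_re,
      Complex.I_re, Complex.I_im, Complex.ofReal_re, Complex.ofReal_im,
      Complex.sub_im, Complex.sub_re, Complex.one_re, Complex.one_im,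
      Complex.neg_im, Complex.neg_re, Complex.div_im, Complex.div_re,
      Matrix.vecHead, Matrix.vecTail] at e1 e2
    linarith

end
end

section
/- Let ρ be a d×d positive definite matrix with all real entries (hence real symmetric) and let A be a Hermitian d×d complex matrix. If ρ∘A has all real entries, then A has all real entries. Consequently, for a strictly positive density matrix ρ with real entries, the set of Hermitian L such that ρ∘L is a real matrix of trace 0 equals the set of real symmetric matrices A with Tr(ρA) = 0. -/
open Matrix
open scoped ComplexOrder

noncomputable section

lemma real_of_jprod_real {d : ℕ} (ρ : Matrix (Fin d) (Fin d) ℂ) (hρ : ρ.PosDef)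
    (hρr : ∀ i j, (ρ i j).im = 0)
    (A : Matrix (Fin d) (Fin d) ℂ) (hA : A.IsHermitian)
    (hre : ∀ i j, ((jprod ρ A) i j).im = 0) : ∀ i j, (A i j).im = 0 := by
  set C : Matrix (Fin d) (Fin d) ℂ := A.map (starRingEnd ℂ) with hC
  set M : Matrix (Fin d) (Fin d) ℂ := A - C with hMdef
  have hρc : ∀ i j, (starRingEnd ℂ) (ρ i j) = ρ i j := fun i j =>
    Complex.conj_eq_iff_im.2 (hρr i j)
  have hAC : ρ * A + A * ρ = ρ * C + C * ρ := by
    ext i j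
    have h := hre i j
    simp only [jprod, Matrix.smul_apply, Matrix.add_apply, smul_eq_mul] at h
    have him : ((ρ * A) i j + (A * ρ) i j).im = 0 := by
      have := Complex.mul_im (1/2) ((ρ * A) i j + (A * ρ) i j)
      rw [h] at this
      rw [Complex.add_im]
      simp at this
      linarith
    have h2 : (starRingEnd ℂ) ((ρ * A) i j + (A * ρ) i j) = (ρ * A) i j + (A * ρ) i j :=
      Complex.conj_eq_iff_im.2 him
    simp only [Matrix.add_apply, mul_apply, map_add, map_sum, _root_.map_mul, hρc] at h2
    simp only [Matrix.add_apply, mul_apply, hC, Matrix.map_apply]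
    exact h2.symm
  have hcomm : ρ * M + M * ρ = 0 := by
    rw [hMdef, Matrix.mul_sub, Matrix.sub_mul, sub_add_sub_comm, hAC, sub_self]
  have hρM : ρ * M = -(M * ρ) := eq_neg_of_add_eq_zero_left hcomm
  have hMH : Mᴴ = M := by
    ext i j
    have h1 : (starRingEnd ℂ) (A j i) = A i j := by
      have := congrFun (congrFun hA.eq i) j
      simpa [conjTranspose_apply] using this
    have h2 : (starRingEnd ℂ) (A i j) = A j i := by
      have := congrFun (congrFun hA.eq j) i
      simpa [conjTranspose_apply] using this
    simp [hMdef, Matrix.sub_apply, conjTranspose_apply, hC, Matrix.map_apply, Complex.star_def,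
      h1, ← h2]
  have ht : (M * ρ * M).trace = 0 := by
    have e1 : (M * ρ * M).trace = (ρ * (M * M)).trace := by
      rw [mul_assoc, trace_mul_comm, mul_assoc]
    have e2 : (M * ρ * M).trace = -((ρ * (M * M)).trace) := by
      rw [mul_assoc, hρM, mul_neg, trace_neg, ← mul_assoc, trace_mul_comm]
    have e3 : (ρ * (M * M)).trace = -((ρ * (M * M)).trace) := e1 ▸ e2
    have e4 : (ρ * (M * M)).trace = 0 := by
      exact add_self_eq_zero.mp (eq_neg_iff_add_eq_zero.mp e3)
    rw [e1, e4]
  have hPSD : (Mᴴ * ρ * M).PosSemidef := hρ.posSemidef.conjTranspose_mul_mul_same M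
  rw [hMH] at hPSD
  have hdiag0 : ∀ j, (M * ρ * M) j j = 0 := by
    have hnn : ∀ j ∈ Finset.univ, (0:ℂ) ≤ (M * ρ * M) j j := by
      intro j _
      exact hPSD.diag_nonneg
    have hsum : ∑ j, (M * ρ * M) j j = 0 := by
      simpa [Matrix.trace, Matrix.diag] using ht
    intro j
    exact (Finset.sum_eq_zero_iff_of_nonneg hnn).mp hsum j (Finset.mem_univ j)
  have hcol : ∀ j, (fun i => M i j) = 0 := by
    intro j
    by_contra hx
    have hlt := hρ.dotProduct_mulVec_pos hx
    have heq : star (fun i => M i j) ⬝ᵥ ρ *ᵥ (fun i => M i j) = (M * ρ * M) j j := by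
      have : (M * ρ * M) j j = (Mᴴ * ρ * M) j j := by rw [hMH]
      rw [this]
      simp only [mul_apply, conjTranspose_apply, dotProduct, mulVec, Pi.star_apply,
        Finset.sum_mul, Finset.mul_sum]
      rw [Finset.sum_comm]
      apply Finset.sum_congr rfl; intro k _
      apply Finset.sum_congr rfl; intro l _
      ring
    rw [heq, hdiag0 j] at hlt
    exact lt_irrefl _ hlt
  intro i j
  have hM0 : M i j = 0 := congrFun (hcol j) i
  have hsub : A i j - (starRingEnd ℂ) (A i j) = 0 := by
    simpa [hMdef, Matrix.sub_apply, hC, Matrix.map_apply] using hM0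
  have hc : (starRingEnd ℂ) (A i j) = A i j := by linear_combination -hsub
  exact Complex.conj_eq_iff_im.1 hc

lemma jprod_trace {d : ℕ} (ρ L : Matrix (Fin d) (Fin d) ℂ) :
    (jprod ρ L).trace = (ρ * L).trace := by
  simp only [jprod, trace_smul, trace_add, trace_mul_comm L ρ, smul_eq_mul]
  ring

/-- If `ρ` is positive definite with real entries and `A` is Hermitian
with `ρ∘A` real, then `A` is real.  Consequently, for a strictly positive density `ρ`
with real entries, the Hermitian `L` with `ρ∘L` a real traceless matrix are exactly the
real symmetric `A` with `Tr(ρA) = 0`. -/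
theorem real_jordan_real (d : ℕ) :
    (∀ ρ : Matrix (Fin d) (Fin d) ℂ, ρ.PosDef → (∀ i j, (ρ i j).im = 0) →
      ∀ A : Matrix (Fin d) (Fin d) ℂ, A.IsHermitian →
        (∀ i j, ((jprod ρ A) i j).im = 0) → ∀ i j, (A i j).im = 0) ∧
    (∀ ρ : Matrix (Fin d) (Fin d) ℂ, ρ.PosDef → (∀ i j, (ρ i j).im = 0) → ρ.trace = 1 →
      {L : Matrix (Fin d) (Fin d) ℂ | L.IsHermitian ∧
          (∀ i j, ((jprod ρ L) i j).im = 0) ∧ (jprod ρ L).trace = 0} =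
        {A : Matrix (Fin d) (Fin d) ℂ | IsRealSymm A ∧ (ρ * A).trace = 0}) := by
  constructor
  · exact fun ρ hρ hρr A hA hre => real_of_jprod_real ρ hρ hρr A hA hre
  · intro ρ hρ hρr _
    ext L
    simp only [Set.mem_setOf_eq]
    constructor
    · rintro ⟨hL, hre, htr⟩
      refine ⟨⟨hL, real_of_jprod_real ρ hρ hρr L hL hre⟩, ?_⟩
      rw [← jprod_trace, htr]
    · rintro ⟨⟨hL, hLr⟩, htr⟩
      refine ⟨hL, ?_, ?_⟩
      · intro i j
        simp [jprod, Matrix.smul_apply, Matrix.add_apply, mul_apply, Complex.mul_im, Complex.add_im,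
          Complex.im_sum, hρr, hLr]
      · rw [jprod_trace, htr]
end
end

section
/- Let F¹, …, Fⁿ be mutually commuting Hermitian d×d complex matrices, P a positive definite Hermitian d×d matrix, Ξ ⊆ ℝⁿ open, and θ = (θ₁,…,θₙ) : Ξ → ℝⁿ, ψ : Ξ → ℝ differentiable. Define h(ξ) := Σⱼ θⱼ(ξ)Fʲ − ψ(ξ)I and ρ_ξ := exp(h(ξ)/2) · P · exp(h(ξ)/2). Then for each i and each ξ ∈ Ξ, ∂ρ_ξ/∂ξⁱ = ρ_ξ ∘ Lᵢ(ξ), where Lᵢ(ξ) := Σⱼ (∂θⱼ/∂ξⁱ)(ξ) Fʲ − (∂ψ/∂ξⁱ)(ξ) I. That is, the SLDs of a quasi-classical exponential family are Lᵢ = Σⱼ(∂ᵢθⱼ)(Fʲ − terms proportional to I). -/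
open Matrix
open scoped ComplexOrder

noncomputable section

/-- The exponent `h(ξ) := Σⱼ θⱼ(ξ)Fʲ − ψ(ξ)I`. -/
def qceExponent {d n : ℕ} (F : Fin n → Matrix (Fin d) (Fin d) ℂ)
    (θ : (Fin n → ℝ) → Fin n → ℝ) (ψ : (Fin n → ℝ) → ℝ) (ξ : Fin n → ℝ) :
    Matrix (Fin d) (Fin d) ℂ :=
  (∑ j, θ ξ j • F j) - ψ ξ • (1 : Matrix (Fin d) (Fin d) ℂ)

/-- The quasi-classical exponential family `ρ_ξ := exp(h(ξ)/2) P exp(h(ξ)/2)`. -/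
def qceState {d n : ℕ} (F : Fin n → Matrix (Fin d) (Fin d) ℂ)
    (P : Matrix (Fin d) (Fin d) ℂ) (θ : (Fin n → ℝ) → Fin n → ℝ)
    (ψ : (Fin n → ℝ) → ℝ) (ξ : Fin n → ℝ) : Matrix (Fin d) (Fin d) ℂ :=
  NormedSpace.exp (((1:ℝ)/2) • qceExponent F θ ψ ξ) * P *
    NormedSpace.exp (((1:ℝ)/2) • qceExponent F θ ψ ξ)

section Aux

attribute [local instance] Matrix.linftyOpNormedAddCommGroup Matrix.linftyOpNormedRing
  Matrix.linftyOpNormedAlgebra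

open NormedSpace

/-- Two real-linear combinations of pairwise-commuting matrices (and `1`) commute. -/
lemma qce_combo_commute {d n : ℕ} (F : Fin n → Matrix (Fin d) (Fin d) ℂ)
    (hcomm : ∀ j k, F j * F k = F k * F j) (c c' : Fin n → ℝ) (s s' : ℝ) :
    Commute ((∑ j, c j • F j) - s • 1) ((∑ j, c' j • F j) - s' • 1) := by
  have hFY : ∀ j, Commute (F j) ((∑ j, c' j • F j) - s' • (1 : Matrix (Fin d) (Fin d) ℂ)) :=
    fun j => Commute.sub_right
      (Commute.sum_right _ _ _ fun k _ => (show Commute (F j) (F k) from hcomm j k).smul_right _)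
      ((Commute.one_right _).smul_right _)
  exact Commute.sub_left
    (Commute.sum_left _ _ _ fun j _ => (hFY j).smul_left _)
    (((Commute.one_left _).smul_left _))

/-- Derivative of `exp` of a differentiable linear combination of commuting matrices. -/
lemma qce_hasDerivAt_exp_sum {d m : ℕ} (G : Fin m → Matrix (Fin d) (Fin d) ℂ)
    (hG : ∀ j k, Commute (G j) (G k)) (g : Fin m → ℝ → ℝ) (g' : Fin m → ℝ) (t₀ : ℝ)
    (hg : ∀ j, HasDerivAt (g j) (g' j) t₀) (s : Finset (Fin m)) :
    HasDerivAt (fun t => exp (∑ j ∈ s, g j t • G j))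
      (exp (∑ j ∈ s, g j t₀ • G j) * (∑ j ∈ s, g' j • G j)) t₀ := by
  classical
  induction s using Finset.induction with
  | empty =>
      simp only [Finset.sum_empty, NormedSpace.exp_zero, mul_zero]
      exact hasDerivAt_const t₀ _
  | insert a s' ha ih =>
      have hcomm1 : ∀ t : ℝ, Commute (g a t • G a) (∑ j ∈ s', g j t • G j) := fun t =>
        Commute.smul_left (Commute.sum_right _ _ _ fun j _ => (hG a j).smul_right _) _
      have h1 : HasDerivAt (fun t => exp (g a t • G a))
          (g' a • (exp (g a t₀ • G a) * G a)) t₀ := by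
        have hx : HasDerivAt (fun u : ℝ => exp (u • G a))
            (exp (g a t₀ • G a) * G a) (g a t₀) := by
          have := hasDerivAt_exp_smul_const (𝕂 := ℝ) (G a) (g a t₀)
          exact this
        exact hx.scomp t₀ (hg a)
      have key : HasDerivAt (fun t => exp (g a t • G a) * exp (∑ j ∈ s', g j t • G j))
          (g' a • (exp (g a t₀ • G a) * G a) * exp (∑ j ∈ s', g j t₀ • G j)
            + exp (g a t₀ • G a) *
              (exp (∑ j ∈ s', g j t₀ • G j) * ∑ j ∈ s', g' j • G j)) t₀ :=
        h1.mul ih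
      have hfun : (fun t => exp (∑ j ∈ insert a s', g j t • G j))
          = fun t => exp (g a t • G a) * exp (∑ j ∈ s', g j t • G j) := by
        funext t
        rw [Finset.sum_insert ha, Matrix.exp_add_of_commute _ _ (hcomm1 t)]
      rw [hfun, Finset.sum_insert ha, Finset.sum_insert ha,
        Matrix.exp_add_of_commute _ _ (hcomm1 t₀)]
      convert key using 1
      have hGE : Commute (G a) (exp (∑ j ∈ s', g j t₀ • G j)) :=
        ((Commute.sum_right _ _ _ fun j _ => (hG a j).smul_right _)).exp_right
      rw [mul_add]
      congr 1
      · rw [smul_mul_assoc, mul_assoc, mul_assoc, hGE.eq, mul_smul_comm, mul_smul_comm]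
      · rw [mul_assoc]

/-- Derivative of `exp(h(ξ)/2)` along the `i`-th coordinate. -/
lemma qce_hasDerivAt_exp_half {d n : ℕ} (F : Fin n → Matrix (Fin d) (Fin d) ℂ)
    (hcomm : ∀ j k, F j * F k = F k * F j)
    (θ : (Fin n → ℝ) → Fin n → ℝ) (ψ : (Fin n → ℝ) → ℝ)
    (ξ : Fin n → ℝ) (i : Fin n) (pθi : Fin n → ℝ) (pψi : ℝ)
    (hθ : ∀ j, HasDerivAt (fun t => θ (Function.update ξ i t) j) (pθi j) (ξ i))
    (hψ : HasDerivAt (fun t => ψ (Function.update ξ i t)) pψi (ξ i)) :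
    HasDerivAt (fun t => exp (((1:ℝ)/2) • qceExponent F θ ψ (Function.update ξ i t)))
      (((1:ℝ)/2) • (exp (((1:ℝ)/2) • qceExponent F θ ψ ξ) *
        ((∑ j, pθi j • F j) - pψi • (1 : Matrix (Fin d) (Fin d) ℂ)))) (ξ i) := by
  classical
  set G : Fin (n+1) → Matrix (Fin d) (Fin d) ℂ := Fin.snoc F 1 with hGdef
  set g : Fin (n+1) → ℝ → ℝ :=
    Fin.snoc (fun j t => θ (Function.update ξ i t) j / 2)
      (fun t => -ψ (Function.update ξ i t) / 2) with hgdef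
  set g' : Fin (n+1) → ℝ := Fin.snoc (fun j => pθi j / 2) (-pψi / 2) with hg'def
  have hG : ∀ j k, Commute (G j) (G k) := by
    intro j k
    induction j using Fin.lastCases with
    | last => simp only [hGdef, Fin.snoc_last]; exact Commute.one_left _
    | cast j' =>
      induction k using Fin.lastCases with
      | last => simp only [hGdef, Fin.snoc_last]; exact Commute.one_right _
      | cast k' =>
        simp only [hGdef, Fin.snoc_castSucc]
        exact hcomm j' k'
  have hg : ∀ j, HasDerivAt (g j) (g' j) (ξ i) := by
    intro j
    induction j using Fin.lastCases with
    | last =>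
        simp only [hgdef, hg'def, Fin.snoc_last]
        exact hψ.neg.div_const 2
    | cast j' =>
        simp only [hgdef, hg'def, Fin.snoc_castSucc]
        exact (hθ j').div_const 2
  have hrw : ∀ t : ℝ, (∑ j, g j t • G j)
      = ((1:ℝ)/2) • qceExponent F θ ψ (Function.update ξ i t) := by
    intro t
    rw [Fin.sum_univ_castSucc]
    simp only [hgdef, hGdef, Fin.snoc_castSucc, Fin.snoc_last]
    rw [qceExponent, smul_sub, Finset.smul_sum, sub_eq_add_neg]
    congr 1
    · exact Finset.sum_congr rfl fun j _ => by rw [smul_smul]; congr 1; ring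
    · rw [smul_smul, ← neg_smul]; congr 1; ring
  have hrw' : (∑ j, g' j • G j)
      = ((1:ℝ)/2) • ((∑ j, pθi j • F j) - pψi • (1 : Matrix (Fin d) (Fin d) ℂ)) := by
    rw [Fin.sum_univ_castSucc]
    simp only [hg'def, hGdef, Fin.snoc_castSucc, Fin.snoc_last]
    rw [smul_sub, Finset.smul_sum, sub_eq_add_neg]
    congr 1
    · exact Finset.sum_congr rfl fun j _ => by rw [smul_smul]; congr 1; ring
    · rw [smul_smul, ← neg_smul]; congr 1; ring
  have h := qce_hasDerivAt_exp_sum G hG g g' (ξ i) hg Finset.univ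
  simp only [hrw, hrw', Function.update_eq_self] at h
  convert h using 1
  rw [mul_smul_comm]

/-- The SLDs of a quasi-classical exponential family are
`Lᵢ(ξ) = Σⱼ (∂ᵢθⱼ)(ξ)Fʲ − (∂ᵢψ)(ξ)I`, i.e. `∂ᵢρ_ξ = ρ_ξ ∘ Lᵢ(ξ)`. -/
theorem qce_sld (d n : ℕ) (F : Fin n → Matrix (Fin d) (Fin d) ℂ)
    (hF : ∀ j, (F j).IsHermitian) (hcomm : ∀ j k, F j * F k = F k * F j)
    (P : Matrix (Fin d) (Fin d) ℂ) (hP : P.PosDef)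
    (Ξ : Set (Fin n → ℝ)) (hΞ : IsOpen Ξ)
    (θ : (Fin n → ℝ) → Fin n → ℝ) (ψ : (Fin n → ℝ) → ℝ)
    (pθ : (Fin n → ℝ) → Fin n → Fin n → ℝ) (pψ : (Fin n → ℝ) → Fin n → ℝ)
    (hθ : ∀ ξ ∈ Ξ, ∀ i j, HasDerivAt (fun t => θ (Function.update ξ i t) j)
      (pθ ξ i j) (ξ i))
    (hψ : ∀ ξ ∈ Ξ, ∀ i, HasDerivAt (fun t => ψ (Function.update ξ i t))
      (pψ ξ i) (ξ i)) :
    ∀ ξ ∈ Ξ, ∀ i, ∀ a b : Fin d,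
      HasDerivAt (fun t => qceState F P θ ψ (Function.update ξ i t) a b)
        ((jprod (qceState F P θ ψ ξ)
          ((∑ j, pθ ξ i j • F j) - pψ ξ i • (1 : Matrix (Fin d) (Fin d) ℂ))) a b)
        (ξ i) := by
  intro ξ hξ i a b
  set L : Matrix (Fin d) (Fin d) ℂ :=
    (∑ j, pθ ξ i j • F j) - pψ ξ i • (1 : Matrix (Fin d) (Fin d) ℂ) with hLdef
  set E : Matrix (Fin d) (Fin d) ℂ := exp (((1:ℝ)/2) • qceExponent F θ ψ ξ) with hEdef
  have hLE : Commute L E := by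
    have hLh : Commute L (qceExponent F θ ψ ξ) :=
      qce_combo_commute F hcomm (pθ ξ i) (θ ξ) (pψ ξ i) (ψ ξ)
    exact (hLh.smul_right ((1:ℝ)/2)).exp_right
  have hDE : HasDerivAt
      (fun t => exp (((1:ℝ)/2) • qceExponent F θ ψ (Function.update ξ i t)))
      (((1:ℝ)/2) • (E * L)) (ξ i) :=
    qce_hasDerivAt_exp_half F hcomm θ ψ ξ i (pθ ξ i) (pψ ξ i)
      (fun j => hθ ξ hξ i j) (hψ ξ hξ i)
  have h2 := (hDE.mul_const P).mul hDE
  simp only [Function.update_eq_self, ← hEdef] at h2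
  have hval : (((1:ℝ)/2) • (E * L)) * P * E + (E * P) * (((1:ℝ)/2) • (E * L))
      = jprod (qceState F P θ ψ ξ) L := by
    show _ = (1/2 : ℂ) • ((E * P * E) * L + L * (E * P * E))
    have hh : ∀ M : Matrix (Fin d) (Fin d) ℂ, ((1:ℝ)/2) • M = (1/2 : ℂ) • M := by
      intro M
      rw [show ((1:ℂ)/2) = algebraMap ℝ ℂ ((1:ℝ)/2) by norm_num, algebraMap_smul]
    have key1 : E * L * P * E = L * (E * P * E) := by rw [← hLE.eq]; noncomm_ring
    have key2 : E * P * (E * L) = E * P * E * L := by noncomm_ring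
    rw [hh (E * L), smul_mul_assoc, smul_mul_assoc, mul_smul_comm, ← smul_add]
    congr 1
    rw [key1, key2]
    exact add_comm _ _
  rw [hval] at h2
  haveI : FiniteDimensional ℝ (Matrix (Fin d) (Fin d) ℂ) := Module.Finite.trans ℂ _
  let l : Matrix (Fin d) (Fin d) ℂ →ₗ[ℝ] ℂ :=
    { toFun := fun M => M a b, map_add' := fun _ _ => rfl, map_smul' := fun _ _ => rfl }
  exact (LinearMap.toContinuousLinearMap l).hasFDerivAt.comp_hasDerivAt (ξ i) h2

end Aux
end
end

section
/- Let (ρ_ξ)_{ξ∈Ξ} be a smooth model of strictly positive d×d density matrices, with SLDs L_{i,ξ} and invertible SLD Fisher matrix G(ξ) = [g_{ij}(ξ)], inverse [g^{ij}(ξ)]. Then the following are equivalent: (ii) there exist Hermitian matrices F¹,…,Fⁿ such that for all ξ ∈ Ξ and all i, Σⱼ g^{ij}(ξ) L_{j,ξ} = Fⁱ − Tr(ρ_ξFⁱ)·I; (iii) there exist Hermitian matrices F¹,…,Fⁿ such that for all ξ ∈ Ξ and all i, Σⱼ g^{ij}(ξ) L_{j,ξ} = Fⁱ − ξⁱ·I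 (which forces ξⁱ = Tr(ρ_ξFⁱ)); (iv) there exist Hermitian matrices F¹,…,Fⁿ such that for all ξ ∈ Ξ and all i, L_{i,ξ} lies in the real span of {F¹,…,Fⁿ, I} and ξⁱ = Tr(ρ_ξFⁱ). -/
open Matrix
open scoped ComplexOrder

noncomputable section

lemma aux_1d {f : ℝ → ℝ} {a b : ℝ} (hab : a ≤ b)
    (h : ∀ t ∈ Set.Icc a b, HasDerivAt f 0 t) : f b = f a := by
  have h2 := norm_image_sub_le_of_norm_deriv_le_segment' (f' := fun _ => (0:ℝ)) (C := 0)
    (fun x hx => (h x hx).hasDerivWithinAt) (fun x _ => by simp) b (Set.right_mem_Icc.2 hab)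
  have h0 : ‖f b - f a‖ ≤ 0 := by simpa using h2
  have := norm_le_zero_iff.mp h0
  exact sub_eq_zero.mp this

lemma aux_deriv_trace {d : ℕ} {g : ℝ → Matrix (Fin d) (Fin d) ℂ}
    {J : Matrix (Fin d) (Fin d) ℂ} {x : ℝ}
    (hg : ∀ a b, HasDerivAt (fun t => g t a b) (J a b) x) (F : Matrix (Fin d) (Fin d) ℂ) :
    HasDerivAt (fun t => Matrix.trace (g t * F)) (Matrix.trace (J * F)) x := by
  have key : ∀ M : Matrix (Fin d) (Fin d) ℂ,
      Matrix.trace (M * F) = ∑ a, ∑ b, M a b * F b a := by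
    intro M
    simp [Matrix.trace, Matrix.mul_apply, Matrix.diag]
  simp only [key]
  exact HasDerivAt.fun_sum fun a _ => HasDerivAt.fun_sum fun b _ => (hg a b).mul_const _

lemma aux_trace_AAH {d : ℕ} {A : Matrix (Fin d) (Fin d) ℂ}
    (h : Matrix.trace (A * Aᴴ) = 0) : A = 0 := by
  have hdiag : ∀ i, (A * Aᴴ) i i = dotProduct (A i) (star (A i)) := by
    intro i
    simp [Matrix.mul_apply, dotProduct, Matrix.conjTranspose_apply]
  have hnn : ∀ i ∈ Finset.univ, (0:ℂ) ≤ (A * Aᴴ) i i := by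
    intro i _
    rw [hdiag]
    exact dotProduct_self_star_nonneg _
  have hz : ∀ i ∈ Finset.univ, (A * Aᴴ) i i = 0 :=
    (Finset.sum_eq_zero_iff_of_nonneg hnn).mp h
  ext i j
  have := dotProduct_self_star_eq_zero.mp ((hdiag i) ▸ hz i (Finset.mem_univ i))
  simpa using congrFun this j

lemma aux_posdef_cancel {d : ℕ} {P A : Matrix (Fin d) (Fin d) ℂ}
    (hP : P.PosDef) (hA : A.IsHermitian) (h : Matrix.trace (P * (A * A)) = 0) : A = 0 := by
  obtain ⟨s, hsherm, hss⟩ : ∃ s : Matrix (Fin d) (Fin d) ℂ, s.IsHermitian ∧ s * s = P := by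
    open scoped MatrixOrder in
    exact ⟨CFC.sqrt P, (CFC.sqrt_nonneg P).posSemidef.1,
      CFC.sqrt_mul_sqrt_self P hP.posSemidef.nonneg⟩
  have hconj : (s * A)ᴴ = A * s := by
    rw [Matrix.conjTranspose_mul, hA.eq, hsherm.eq]
  have htr : Matrix.trace ((s * A) * (s * A)ᴴ) = 0 := by
    rw [hconj]
    calc Matrix.trace ((s * A) * (A * s)) = Matrix.trace ((A * s) * (s * A)) :=
          Matrix.trace_mul_comm _ _
      _ = Matrix.trace (A * (P * A)) := by
          rw [Matrix.mul_assoc, ← Matrix.mul_assoc s s A, hss]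
      _ = Matrix.trace ((P * A) * A) := Matrix.trace_mul_comm _ _
      _ = Matrix.trace (P * (A * A)) := by rw [Matrix.mul_assoc]
      _ = 0 := h
  have hsA : s * A = 0 := aux_trace_AAH htr
  have hPA : P * A = 0 := by rw [← hss, Matrix.mul_assoc, hsA, Matrix.mul_zero]
  have hdet : IsUnit P.det := hP.det_pos.ne'.isUnit
  calc A = P⁻¹ * (P * A) := by rw [← Matrix.mul_assoc, Matrix.nonsing_inv_mul _ hdet, Matrix.one_mul]
    _ = 0 := by rw [hPA, Matrix.mul_zero]

lemma aux_ball_const {n : ℕ} {Ξ : Set (Fin n → ℝ)} {h : (Fin n → ℝ) → ℝ}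
    (hd : ∀ ξ ∈ Ξ, ∀ k, HasDerivAt (fun t => h (Function.update ξ k t)) 0 (ξ k))
    {x : Fin n → ℝ} {r : ℝ} (hball : Metric.ball x r ⊆ Ξ) :
    ∀ y ∈ Metric.ball x r, h y = h x := by
  suffices H : ∀ s : Finset (Fin n), ∀ y ∈ Metric.ball x r,
      (∀ j ∉ s, y j = x j) → h y = h x by
    intro y hy
    exact H Finset.univ y hy (fun j hj => absurd (Finset.mem_univ j) hj)
  intro s
  induction s using Finset.induction_on with
  | empty =>
    intro y _ hagree
    have : y = x := funext fun j => hagree j (Finset.notMem_empty j)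
    rw [this]
  | @insert k s hk ih =>
    intro y hy hagree
    have hr : 0 < r := lt_of_le_of_lt dist_nonneg (Metric.mem_ball.mp hy)
    have hylt : ∀ j, dist (y j) (x j) < r := (dist_pi_lt_iff hr).mp (Metric.mem_ball.mp hy)
    set y' := Function.update y k (x k) with hy'def
    have hy' : y' ∈ Metric.ball x r := by
      refine Metric.mem_ball.mpr ((dist_pi_lt_iff hr).mpr (fun j => ?_))
      by_cases hj : j = k
      · subst hj; simp [hy'def, hr]
      · simpa [hy'def, Function.update_of_ne hj] using hylt j
    have hagree' : ∀ j ∉ s, y' j = x j := by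
      intro j hj
      by_cases hjk : j = k
      · subst hjk; simp [hy'def]
      · rw [hy'def, Function.update_of_ne hjk]
        exact hagree j (by simp [Finset.mem_insert, hj, hjk])
    have ihy : h y' = h x := ih y' hy' hagree'
    -- connect h y and h y' along coordinate k
    have hseg : ∀ t ∈ Set.Icc (min (x k) (y k)) (max (x k) (y k)),
        HasDerivAt (fun t => h (Function.update y k t)) 0 t := by
      intro t ht
      have key : |t - x k| ≤ |y k - x k| := by
        rcases le_total (x k) (y k) with hc | hc
        · rw [min_eq_left hc, max_eq_right hc] at ht
          rw [abs_of_nonneg (by linarith [ht.1] : (0:ℝ) ≤ t - x k),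
            abs_of_nonneg (by linarith : (0:ℝ) ≤ y k - x k)]
          linarith [ht.2]
        · rw [min_eq_right hc, max_eq_left hc] at ht
          rw [abs_of_nonpos (by linarith [ht.2] : t - x k ≤ 0),
            abs_of_nonpos (by linarith : y k - x k ≤ 0)]
          linarith [ht.1]
      have htd : dist t (x k) < r := by
        rw [Real.dist_eq]
        have h1 := hylt k
        rw [Real.dist_eq] at h1
        exact lt_of_le_of_lt key h1
      have hzball : Function.update y k t ∈ Metric.ball x r := by
        refine Metric.mem_ball.mpr ((dist_pi_lt_iff hr).mpr (fun j => ?_))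
        by_cases hj : j = k
        · subst hj; simpa using htd
        · simpa [Function.update_of_ne hj] using hylt j
      have hz := hd (Function.update y k t) (hball hzball) k
      simp only [Function.update_idem] at hz
      rwa [Function.update_self] at hz
    have hyy' : h y = h y' := by
      rcases le_total (x k) (y k) with hc | hc
      · have := aux_1d (a := x k) (b := y k) hc (by
          intro t ht
          exact hseg t (by rwa [min_eq_left hc, max_eq_right hc]))
        simpa [Function.update_eq_self, hy'def] using this
      · have := aux_1d (a := y k) (b := x k) hc (by
          intro t ht
          exact hseg t (by rwa [min_eq_right hc, max_eq_left hc]))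
        simpa [Function.update_eq_self, hy'def] using this.symm
    rw [hyy', ihy]

lemma aux_const {n : ℕ} {Ξ : Set (Fin n → ℝ)} (hΞopen : IsOpen Ξ)
    (hΞconn : IsPreconnected Ξ) {h : (Fin n → ℝ) → ℝ}
    (hd : ∀ ξ ∈ Ξ, ∀ k, HasDerivAt (fun t => h (Function.update ξ k t)) 0 (ξ k)) :
    ∀ ξ ∈ Ξ, ∀ η ∈ Ξ, h η = h ξ := by
  intro ξ hξ η hη
  have hloc : ∀ x ∈ Ξ, ∃ r > 0, Metric.ball x r ⊆ Ξ ∧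
      ∀ y ∈ Metric.ball x r, h y = h x := by
    intro x hx
    obtain ⟨r, hr, hsub⟩ := Metric.isOpen_iff.mp hΞopen x hx
    exact ⟨r, hr, hsub, aux_ball_const hd hsub⟩
  set U := ⋃₀ {B | IsOpen B ∧ B ⊆ Ξ ∧ ∀ y ∈ B, h y = h ξ} with hU
  set V := ⋃₀ {B | IsOpen B ∧ B ⊆ Ξ ∧ ∀ y ∈ B, h y ≠ h ξ} with hV
  have hUopen : IsOpen U := isOpen_sUnion fun B hB => hB.1
  have hVopen : IsOpen V := isOpen_sUnion fun B hB => hB.1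
  have hcover : Ξ ⊆ U ∪ V := by
    intro x hx
    obtain ⟨r, hr, hsub, hconst⟩ := hloc x hx
    by_cases hx' : h x = h ξ
    · exact Or.inl ⟨Metric.ball x r, ⟨Metric.isOpen_ball, hsub,
        fun y hy => (hconst y hy).trans hx'⟩, Metric.mem_ball_self hr⟩
    · exact Or.inr ⟨Metric.ball x r, ⟨Metric.isOpen_ball, hsub,
        fun y hy => by rw [hconst y hy]; exact hx'⟩, Metric.mem_ball_self hr⟩
  have hξU : ξ ∈ U := by
    obtain ⟨r, hr, hsub, hconst⟩ := hloc ξ hξ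
    exact ⟨Metric.ball ξ r, ⟨Metric.isOpen_ball, hsub, hconst⟩, Metric.mem_ball_self hr⟩
  have hdisj : ¬ (Ξ ∩ (U ∩ V)).Nonempty := by
    rintro ⟨z, _, hzU, hzV⟩
    obtain ⟨B, ⟨_, _, hB⟩, hzB⟩ := hzU
    obtain ⟨C, ⟨_, _, hC⟩, hzC⟩ := hzV
    exact hC z hzC (hB z hzB)
  by_cases hηV : η ∈ V
  · exact absurd (hΞconn U V hUopen hVopen hcover ⟨ξ, hξ, hξU⟩ ⟨η, hη, hηV⟩) hdisj
  · obtain ⟨B, ⟨_, _, hB⟩, hzB⟩ := (hcover hη).resolve_right hηV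
    exact hB η hzB


lemma aux_jprod_trace_one {d : ℕ} (P A : Matrix (Fin d) (Fin d) ℂ) :
    Matrix.trace (jprod P A) = Matrix.trace (P * A) := by
  simp only [jprod, Matrix.trace_smul, Matrix.trace_add, Matrix.trace_mul_comm A P, smul_eq_mul]
  ring

lemma aux_jprod_trace {d : ℕ} (P A F : Matrix (Fin d) (Fin d) ℂ) :
    Matrix.trace (jprod P A * F) =
      (1/2 : ℂ) * (Matrix.trace (P * A * F) + Matrix.trace (P * F * A)) := by
  have h : Matrix.trace (A * P * F) = Matrix.trace (P * F * A) := by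
    rw [Matrix.mul_assoc, Matrix.trace_mul_comm]
  simp only [jprod, Matrix.smul_mul, Matrix.add_mul, Matrix.trace_smul, Matrix.trace_add,
    smul_eq_mul, h]

lemma aux_trace_cyclic_star {d : ℕ} {P A B : Matrix (Fin d) (Fin d) ℂ}
    (hP : P.IsHermitian) (hA : A.IsHermitian) (hB : B.IsHermitian) :
    Matrix.trace (P * B * A) = star (Matrix.trace (P * A * B)) := by
  rw [← Matrix.trace_conjTranspose]
  have h : (P * A * B)ᴴ = B * (A * P) := by
    rw [Matrix.conjTranspose_mul, Matrix.conjTranspose_mul, hP.eq, hA.eq, hB.eq]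
  rw [h, Matrix.trace_mul_comm, ← Matrix.mul_assoc, Matrix.trace_mul_comm, ← Matrix.mul_assoc]

lemma aux_trace_real {d : ℕ} {P F : Matrix (Fin d) (Fin d) ℂ}
    (hP : P.IsHermitian) (hF : F.IsHermitian) :
    ((Matrix.trace (P * F)).re : ℂ) = Matrix.trace (P * F) := by
  have h : star (Matrix.trace (P * F)) = Matrix.trace (P * F) := by
    rw [← Matrix.trace_conjTranspose, Matrix.conjTranspose_mul, hP.eq, hF.eq,
      Matrix.trace_mul_comm]
  exact Complex.conj_eq_iff_re.mp h

lemma aux_smul {d : ℕ} (r : ℝ) (M : Matrix (Fin d) (Fin d) ℂ) :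
    ((r : ℂ)) • M = r • M := by
  rw [← Complex.coe_algebraMap, algebraMap_smul]


/-- For a smooth model `(ρ_ξ)` of strictly positive density matrices
with SLDs `L_{i,ξ}` and invertible SLD Fisher matrix `G(ξ)`, the conditions (ii), (iii),
(iv) characterizing e-autoparallelity with `ξ` m-affine are equivalent. -/
theorem e_autoparallel_m_affine_characterizations (d n : ℕ)
    (Ξ : Set (Fin n → ℝ)) (hΞopen : IsOpen Ξ) (hΞconn : IsPreconnected Ξ)
    (ρ : (Fin n → ℝ) → Matrix (Fin d) (Fin d) ℂ)
    (hρ : ∀ ξ ∈ Ξ, (ρ ξ).PosDef ∧ (ρ ξ).trace = 1)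
    (hinj : Set.InjOn ρ Ξ)
    (L : (Fin n → ℝ) → Fin n → Matrix (Fin d) (Fin d) ℂ)
    (hLherm : ∀ ξ ∈ Ξ, ∀ i, (L ξ i).IsHermitian)
    (hLsld : ∀ ξ ∈ Ξ, ∀ i, ∀ a b : Fin d,
      HasDerivAt (fun t => ρ (Function.update ξ i t) a b)
        ((jprod (ρ ξ) (L ξ i)) a b) (ξ i))
    (G : (Fin n → ℝ) → Matrix (Fin n) (Fin n) ℝ)
    (hG : ∀ ξ ∈ Ξ, ∀ i j, G ξ i j = (Matrix.trace (ρ ξ * L ξ i * L ξ j)).re)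
    (hGinv : ∀ ξ ∈ Ξ, IsUnit (G ξ).det) :
    ((∃ F : Fin n → Matrix (Fin d) (Fin d) ℂ, (∀ i, (F i).IsHermitian) ∧
        ∀ ξ ∈ Ξ, ∀ i, (∑ j, (G ξ)⁻¹ i j • L ξ j) =
          F i - (Matrix.trace (ρ ξ * F i)) • (1 : Matrix (Fin d) (Fin d) ℂ)) ↔
      (∃ F : Fin n → Matrix (Fin d) (Fin d) ℂ, (∀ i, (F i).IsHermitian) ∧
        ∀ ξ ∈ Ξ, ∀ i, (∑ j, (G ξ)⁻¹ i j • L ξ j) =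
          F i - ξ i • (1 : Matrix (Fin d) (Fin d) ℂ))) ∧
    ((∃ F : Fin n → Matrix (Fin d) (Fin d) ℂ, (∀ i, (F i).IsHermitian) ∧
        ∀ ξ ∈ Ξ, ∀ i, (∑ j, (G ξ)⁻¹ i j • L ξ j) =
          F i - ξ i • (1 : Matrix (Fin d) (Fin d) ℂ)) ↔
      (∃ F : Fin n → Matrix (Fin d) (Fin d) ℂ, (∀ i, (F i).IsHermitian) ∧
        ∀ ξ ∈ Ξ, ∀ i,
          L ξ i ∈ Submodule.span ℝ
            (Set.range F ∪ {(1 : Matrix (Fin d) (Fin d) ℂ)}) ∧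
          Matrix.trace (ρ ξ * F i) = (ξ i : ℂ))) := by
  classical
  -- ## Common facts
  have h1trace : ∀ ξ ∈ Ξ, Matrix.trace (ρ ξ) = 1 := fun ξ hξ => (hρ ξ hξ).2
  have hTd : ∀ ξ ∈ Ξ, ∀ k, ∀ F : Matrix (Fin d) (Fin d) ℂ,
      HasDerivAt (fun t => Matrix.trace (ρ (Function.update ξ k t) * F))
        (Matrix.trace (jprod (ρ ξ) (L ξ k) * F)) (ξ k) :=
    fun ξ hξ k F => aux_deriv_trace (hLsld ξ hξ k) F
  have hnhds : ∀ ξ ∈ Ξ, ∀ k : Fin n,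
      ∀ᶠ t in nhds (ξ k), Function.update ξ k t ∈ Ξ := by
    intro ξ hξ k
    have hcont : Continuous (fun t : ℝ => Function.update ξ k t) := by
      apply continuous_pi
      intro j
      simp only [Function.update_apply]
      by_cases hj : j = k
      · simp only [hj, if_pos]
        exact continuous_id
      · simp only [hj, if_false]
        exact continuous_const
    have hmem : Function.update ξ k (ξ k) ∈ Ξ := by
      rwa [Function.update_eq_self]
    exact Filter.eventually_of_mem ((hΞopen.preimage hcont).mem_nhds hmem) (fun t ht => ht)
  have hδ0 : ∀ ξ ∈ Ξ, ∀ k, Matrix.trace (ρ ξ * L ξ k) = 0 := by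
    intro ξ hξ k
    have h1 := hTd ξ hξ k 1
    simp only [Matrix.mul_one] at h1
    have hev : (fun t => Matrix.trace (ρ (Function.update ξ k t))) =ᶠ[nhds (ξ k)]
        (fun _ => (1:ℂ)) := (hnhds ξ hξ k).mono (fun t ht => (hρ _ ht).2)
    have h3 : HasDerivAt (fun t => Matrix.trace (ρ (Function.update ξ k t))) 0 (ξ k) :=
      (hasDerivAt_const (ξ k) (1:ℂ)).congr_of_eventuallyEq hev
    have h4 := h3.unique h1
    rw [← aux_jprod_trace_one]
    exact h4.symm
  have hBLL : ∀ ξ ∈ Ξ, ∀ k j,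
      Matrix.trace (jprod (ρ ξ) (L ξ k) * L ξ j) = ((G ξ k j : ℝ) : ℂ) := by
    intro ξ hξ k j
    rw [aux_jprod_trace]
    rw [aux_trace_cyclic_star (hρ ξ hξ).1.1 (hLherm ξ hξ k) (hLherm ξ hξ j)]
    rw [Complex.star_def, Complex.add_conj, hG ξ hξ k j]
    push_cast
    ring
  have hGsymm : ∀ ξ ∈ Ξ, ∀ k j, G ξ k j = G ξ j k := by
    intro ξ hξ k j
    rw [hG ξ hξ k j, hG ξ hξ j k,
      aux_trace_cyclic_star (hρ ξ hξ).1.1 (hLherm ξ hξ j) (hLherm ξ hξ k)]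
    simp
  have hInv : ∀ ξ ∈ Ξ, (G ξ)⁻¹ * G ξ = 1 := fun ξ hξ => Matrix.nonsing_inv_mul _ (hGinv ξ hξ)
  have hInv' : ∀ ξ ∈ Ξ, G ξ * (G ξ)⁻¹ = 1 := fun ξ hξ => Matrix.mul_nonsing_inv _ (hGinv ξ hξ)
  have hTrM : ∀ ξ ∈ Ξ, ∀ i,
      Matrix.trace (ρ ξ * ∑ j, (G ξ)⁻¹ i j • L ξ j) = 0 := by
    intro ξ hξ i
    rw [Matrix.mul_sum, Matrix.trace_sum]
    simp [Matrix.mul_smul, Matrix.trace_smul, hδ0 ξ hξ]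
  have hjMδ : ∀ ξ ∈ Ξ, ∀ i k,
      Matrix.trace (jprod (ρ ξ) (L ξ k) * ∑ j, (G ξ)⁻¹ i j • L ξ j) =
        (((1 : Matrix (Fin n) (Fin n) ℝ) i k : ℝ) : ℂ) := by
    intro ξ hξ i k
    rw [Matrix.mul_sum, Matrix.trace_sum]
    have hterm : ∀ j ∈ Finset.univ,
        Matrix.trace (jprod (ρ ξ) (L ξ k) * ((G ξ)⁻¹ i j • L ξ j)) =
          (((G ξ)⁻¹ i j * G ξ j k : ℝ) : ℂ) := by
      intro j _
      rw [Matrix.mul_smul, Matrix.trace_smul, hBLL ξ hξ k j, hGsymm ξ hξ k j]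
      rw [Complex.real_smul]
      push_cast
      ring
    rw [Finset.sum_congr rfl hterm, ← hInv ξ hξ, Matrix.mul_apply]
    push_cast
    ring
  -- trace (ρ ξ * F i) = ξ i follows from the (iii) identity
  have htr_of_iii : ∀ (F : Fin n → Matrix (Fin d) (Fin d) ℂ),
      (∀ ξ ∈ Ξ, ∀ i, (∑ j, (G ξ)⁻¹ i j • L ξ j) =
        F i - ξ i • (1 : Matrix (Fin d) (Fin d) ℂ)) →
      ∀ ξ ∈ Ξ, ∀ i, Matrix.trace (ρ ξ * F i) = (ξ i : ℂ) := by
    intro F hFe ξ hξ i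
    have h0 := hTrM ξ hξ i
    rw [hFe ξ hξ i, Matrix.mul_sub, Matrix.trace_sub, Matrix.mul_smul, Matrix.mul_one,
      Matrix.trace_smul, h1trace ξ hξ] at h0
    have h1 : ξ i • (1:ℂ) = (ξ i : ℂ) := by
      rw [Complex.real_smul, mul_one]
    rw [h1] at h0
    exact sub_eq_zero.mp h0
  constructor
  · constructor
    · -- (ii) → (iii)
      rintro ⟨F, hFh, hFe⟩
      rcases Set.eq_empty_or_nonempty Ξ with hemp | ⟨ξ0, hξ0⟩
      · exact ⟨F, hFh, fun ξ hξ => absurd hξ (by simp [hemp])⟩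
      -- partial derivatives of ξ ↦ Re tr(ρ_ξ F i) - ξ i vanish
      have hderiv : ∀ i, ∀ ζ ∈ Ξ, ∀ k, HasDerivAt
          (fun t => (Matrix.trace (ρ (Function.update ζ k t) * F i)).re -
            Function.update ζ k t i) 0 (ζ k) := by
        intro i ζ hζ k
        have h1 := hTd ζ hζ k (F i)
        have hD : Matrix.trace (jprod (ρ ζ) (L ζ k) * F i) =
            (((1 : Matrix (Fin n) (Fin n) ℝ) i k : ℝ) : ℂ) := by
          have hFi : F i = (∑ j, (G ζ)⁻¹ i j • L ζ j) +
              Matrix.trace (ρ ζ * F i) • (1 : Matrix (Fin d) (Fin d) ℂ) := by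
            rw [hFe ζ hζ i]
            exact (sub_add_cancel _ _).symm
          rw [hFi, Matrix.mul_add, Matrix.trace_add, hjMδ ζ hζ i k, Matrix.mul_smul,
            Matrix.mul_one, Matrix.trace_smul, aux_jprod_trace_one, hδ0 ζ hζ k,
            smul_zero, add_zero]
        have h2 : HasDerivAt
            (fun t => (Matrix.trace (ρ (Function.update ζ k t) * F i)).re)
            ((1 : Matrix (Fin n) (Fin n) ℝ) i k) (ζ k) := by
          have h3 := Complex.reCLM.hasFDerivAt.comp_hasDerivAt (ζ k) h1
          rw [hD] at h3
          simpa [Function.comp_def] using h3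
        have h4 : HasDerivAt (fun t => Function.update ζ k t i)
            ((1 : Matrix (Fin n) (Fin n) ℝ) i k) (ζ k) := by
          by_cases hik : i = k
          · subst hik
            simp only [Function.update_self, Matrix.one_apply_eq]
            exact hasDerivAt_id' (ζ i)
          · simp only [Function.update_of_ne hik, Matrix.one_apply_ne hik]
            exact hasDerivAt_const _ _
        simpa using h2.fun_sub h4
      have hc : ∀ i, ∀ η ∈ Ξ,
          (Matrix.trace (ρ η * F i)).re - η i =
            (Matrix.trace (ρ ξ0 * F i)).re - ξ0 i := by
        intro i η hη
        exact aux_const hΞopen hΞconn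
          (h := fun x => (Matrix.trace (ρ x * F i)).re - x i)
          (fun ζ hζ k => hderiv i ζ hζ k) ξ0 hξ0 η hη
      refine ⟨fun i => F i -
        (((Matrix.trace (ρ ξ0 * F i)).re - ξ0 i : ℝ) : ℂ) • 1, fun i => ?_, ?_⟩
      · have h6 : ((((Matrix.trace (ρ ξ0 * F i)).re - ξ0 i : ℝ) : ℂ) •
            (1 : Matrix (Fin d) (Fin d) ℂ)).IsHermitian := by
          show _ = _
          rw [Matrix.conjTranspose_smul, Matrix.conjTranspose_one, Complex.star_def,
            Complex.conj_ofReal]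
        exact (hFh i).sub h6
      · intro ξ hξ i
        rw [hFe ξ hξ i]
        beta_reduce
        have hcc : ((Matrix.trace (ρ ξ0 * F i)).re - ξ0 i : ℝ) =
            (Matrix.trace (ρ ξ * F i)).re - ξ i := (hc i ξ hξ).symm
        have hreal := aux_trace_real (hρ ξ hξ).1.1 (hFh i)
        rw [hcc, ← aux_smul (ξ i), ← hreal]
        push_cast [Complex.ofReal_re]
        rw [sub_smul]
        abel
    · -- (iii) → (ii)
      rintro ⟨F, hFh, hFe⟩
      refine ⟨F, hFh, fun ξ hξ i => ?_⟩
      rw [htr_of_iii F hFe ξ hξ i, aux_smul]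
      exact hFe ξ hξ i
  · constructor
    · -- (iii) → (iv)
      rintro ⟨F, hFh, hFe⟩
      refine ⟨F, hFh, fun ξ hξ i => ⟨?_, htr_of_iii F hFe ξ hξ i⟩⟩
      have hLrep : L ξ i = ∑ k, G ξ i k • (∑ j, (G ξ)⁻¹ k j • L ξ j) := by
        simp_rw [Finset.smul_sum, smul_smul]
        rw [Finset.sum_comm]
        have : ∀ j ∈ Finset.univ,
            (∑ k, (G ξ i k * (G ξ)⁻¹ k j) • L ξ j) =
              ((1 : Matrix (Fin n) (Fin n) ℝ) i j) • L ξ j := by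
          intro j _
          rw [← Finset.sum_smul, ← Matrix.mul_apply, hInv' ξ hξ]
        rw [Finset.sum_congr rfl this]
        simp [Matrix.one_apply, ite_smul]
      rw [hLrep]
      refine Submodule.sum_mem _ (fun k _ => Submodule.smul_mem _ _ ?_)
      rw [hFe ξ hξ k]
      refine Submodule.sub_mem _ (Submodule.subset_span (Or.inl ⟨k, rfl⟩))
        (Submodule.smul_mem _ _ (Submodule.subset_span (Or.inr rfl)))
    · -- (iv) → (iii)
      rintro ⟨F, hFh, hFe⟩
      refine ⟨F, hFh, fun ξ hξ i => ?_⟩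
      have hPD := (hρ ξ hξ).1
      have hLF : ∀ k j, Matrix.trace (jprod (ρ ξ) (L ξ k) * F j) =
          (((1 : Matrix (Fin n) (Fin n) ℝ) j k : ℝ) : ℂ) := by
        intro k j
        have h1 := hTd ξ hξ k (F j)
        have hev : (fun t => Matrix.trace (ρ (Function.update ξ k t) * F j)) =ᶠ[nhds (ξ k)]
            (fun t => ((Function.update ξ k t j : ℝ) : ℂ)) :=
          (hnhds ξ hξ k).mono (fun t ht => (hFe _ ht j).2)
        have h2 : HasDerivAt (fun t => ((Function.update ξ k t j : ℝ) : ℂ))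
            ((((1 : Matrix (Fin n) (Fin n) ℝ) j k : ℝ)) : ℂ) (ξ k) := by
          by_cases hjk : j = k
          · subst hjk
            simp only [Function.update_self, Matrix.one_apply_eq, Complex.ofReal_one]
            simpa using (hasDerivAt_id' (ξ j)).ofReal_comp
          · simp only [Function.update_of_ne hjk, Matrix.one_apply_ne hjk, Complex.ofReal_zero]
            exact hasDerivAt_const _ _
        exact ((h2.congr_of_eventuallyEq hev).unique h1).symm
      set v : Fin (n+1) → Matrix (Fin d) (Fin d) ℂ := Fin.cons 1 (fun k => L ξ k) with hv
      set M : Matrix (Fin d) (Fin d) ℂ := ∑ j, (G ξ)⁻¹ i j • L ξ j with hM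
      set R : Matrix (Fin d) (Fin d) ℂ :=
        F i - M - ξ i • (1 : Matrix (Fin d) (Fin d) ℂ) with hR
      have hTrM' : Matrix.trace (ρ ξ * M) = 0 := by rw [hM]; exact hTrM ξ hξ i
      have htrR : Matrix.trace (ρ ξ * R) = 0 := by
        rw [hR, Matrix.mul_sub, Matrix.mul_sub, Matrix.trace_sub, Matrix.trace_sub,
          (hFe ξ hξ i).2, hTrM', Matrix.mul_smul, Matrix.mul_one, Matrix.trace_smul,
          h1trace ξ hξ]
        simp [Complex.real_smul]
      have hjR : ∀ k, Matrix.trace (jprod (ρ ξ) (L ξ k) * R) = 0 := by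
        intro k
        have h2 : Matrix.trace (jprod (ρ ξ) (L ξ k) * M) =
            (((1 : Matrix (Fin n) (Fin n) ℝ) i k : ℝ) : ℂ) := by
          rw [hM]; exact hjMδ ξ hξ i k
        rw [hR, Matrix.mul_sub, Matrix.mul_sub, Matrix.trace_sub, Matrix.trace_sub,
          hLF k i, h2, Matrix.mul_smul, Matrix.mul_one, Matrix.trace_smul,
          aux_jprod_trace_one, hδ0 ξ hξ k]
        simp
      have hRherm : R.IsHermitian := by
        have hMh : M.IsHermitian := by
          rw [hM]
          show (∑ j, (G ξ)⁻¹ i j • L ξ j)ᴴ = _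
          rw [Matrix.conjTranspose_sum]
          exact Finset.sum_congr rfl fun j _ => by
            rw [Matrix.conjTranspose_smul, star_trivial, (hLherm ξ hξ j).eq]
        have h1h : ((ξ i) • (1 : Matrix (Fin d) (Fin d) ℂ)).IsHermitian := by
          show _ = _
          rw [Matrix.conjTranspose_smul, star_trivial, Matrix.conjTranspose_one]
        exact ((hFh i).sub hMh).sub h1h
      have hli : LinearIndependent ℝ v := by
        rw [Fintype.linearIndependent_iff]
        intro c hc
        have hsum : (c 0) • (1 : Matrix (Fin d) (Fin d) ℂ) + ∑ k, c (Fin.succ k) • L ξ k = 0 := by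
          rw [Fin.sum_univ_succ] at hc
          simpa [hv, Fin.cons_zero, Fin.cons_succ] using hc
        have hc0 : c 0 = 0 := by
          have h0 := congrArg (fun A => Matrix.trace (ρ ξ * A)) hsum
          simp only [Matrix.mul_add, Matrix.trace_add, Matrix.mul_smul, Matrix.mul_one,
            Matrix.trace_smul, Matrix.mul_sum, Matrix.trace_sum, Matrix.mul_zero,
            Matrix.trace_zero, h1trace ξ hξ, hδ0 ξ hξ, smul_zero, Finset.sum_const_zero,
            add_zero, Complex.real_smul, mul_one] at h0
          exact_mod_cast h0
        have hrow : ∀ jj, ∑ k, c (Fin.succ k) * G ξ jj k = 0 := by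
          intro jj
          have h0 := congrArg (fun A => Matrix.trace (jprod (ρ ξ) (L ξ jj) * A)) hsum
          simp only [Matrix.mul_add, Matrix.trace_add, Matrix.mul_smul, Matrix.mul_one,
            Matrix.trace_smul, Matrix.mul_sum, Matrix.trace_sum, Matrix.mul_zero,
            Matrix.trace_zero, aux_jprod_trace_one, hδ0 ξ hξ, smul_zero, zero_add,
            hBLL ξ hξ jj, Complex.real_smul] at h0
          have h1 : ((∑ k, c (Fin.succ k) * G ξ jj k : ℝ) : ℂ) = 0 := by
            push_cast
            simpa using h0
          exact_mod_cast h1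
        have hsucc : ∀ k, c (Fin.succ k) = 0 := by
          have hGw : G ξ *ᵥ (fun k => c (Fin.succ k)) = 0 := by
            funext jj
            simpa [Matrix.mulVec, dotProduct, mul_comm] using hrow jj
          have h2 := congrArg (fun u => (G ξ)⁻¹ *ᵥ u) hGw
          simp only [Matrix.mulVec_mulVec, hInv ξ hξ, Matrix.one_mulVec,
            Matrix.mulVec_zero] at h2
          intro k
          exact congrFun h2 k
        intro m
        exact Fin.cases hc0 hsucc m
      haveI hfin : FiniteDimensional ℝ (Matrix (Fin d) (Fin d) ℂ) :=
        Module.Finite.trans ℂ (Matrix (Fin d) (Fin d) ℂ)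
      have hWU : Submodule.span ℝ (Set.range v) ≤
          Submodule.span ℝ (Set.range F ∪ {(1 : Matrix (Fin d) (Fin d) ℂ)}) := by
        rw [Submodule.span_le]
        rintro _ ⟨m, rfl⟩
        rcases Fin.eq_zero_or_eq_succ m with rfl | ⟨k, rfl⟩
        · have h1 : (1 : Matrix (Fin d) (Fin d) ℂ) ∈
              Set.range F ∪ {(1 : Matrix (Fin d) (Fin d) ℂ)} := Or.inr rfl
          simpa [hv] using Submodule.subset_span h1
        · simpa [hv] using (hFe ξ hξ k).1
      have hrange : Set.range F ∪ {(1 : Matrix (Fin d) (Fin d) ℂ)} =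
          Set.range (Matrix.vecCons (1 : Matrix (Fin d) (Fin d) ℂ) F) := by
        rw [Matrix.range_cons, Set.union_comm]
      have hUrank : Module.finrank ℝ (Submodule.span ℝ
          (Set.range F ∪ {(1 : Matrix (Fin d) (Fin d) ℂ)})) ≤ n + 1 := by
        rw [hrange]
        refine (finrank_span_le_card _).trans ?_
        rw [Set.toFinset_card]
        simpa using Fintype.card_range_le (Matrix.vecCons (1 : Matrix (Fin d) (Fin d) ℂ) F)
      have hWeq : Submodule.span ℝ (Set.range v) =
          Submodule.span ℝ (Set.range F ∪ {(1 : Matrix (Fin d) (Fin d) ℂ)}) := by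
        apply Submodule.eq_of_le_of_finrank_le hWU
        rw [finrank_span_eq_card hli, Fintype.card_fin]
        exact hUrank
      have hRmem : R ∈ Submodule.span ℝ (Set.range v) := by
        rw [hWeq, hR, hM]
        refine Submodule.sub_mem _ (Submodule.sub_mem _
          (Submodule.subset_span (Or.inl ⟨i, rfl⟩))
          (Submodule.sum_mem _ (fun j _ => Submodule.smul_mem _ _ (hFe ξ hξ j).1)))
          (Submodule.smul_mem _ _ (Submodule.subset_span (Or.inr rfl)))
      obtain ⟨cc, hcc⟩ := (Submodule.mem_span_range_iff_exists_fun ℝ).mp hRmem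
      have hzero : ∀ m, Matrix.trace (ρ ξ * (R * v m)) + Matrix.trace (ρ ξ * (v m * R)) = 0 := by
        intro m
        rcases Fin.eq_zero_or_eq_succ m with rfl | ⟨k, rfl⟩
        · simp [hv, htrR]
        · have h1 := hjR k
          rw [aux_jprod_trace] at h1
          have hhalf : (1/2 : ℂ) ≠ 0 := by norm_num
          have h1' : Matrix.trace (ρ ξ * L ξ k * R) + Matrix.trace (ρ ξ * R * L ξ k) = 0 :=
            (mul_eq_zero.mp h1).resolve_left hhalf
          simp only [hv, Fin.cons_succ, ← Matrix.mul_assoc]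
          rw [add_comm]
          exact h1'
      have hRR : Matrix.trace (ρ ξ * (R * R)) = 0 := by
        have e1 : Matrix.trace (ρ ξ * (R * R)) =
            ∑ m, (cc m : ℂ) * Matrix.trace (ρ ξ * (R * v m)) := by
          nth_rewrite 2 [← hcc]
          rw [Matrix.mul_sum, Matrix.mul_sum, Matrix.trace_sum]
          refine Finset.sum_congr rfl (fun m _ => ?_)
          rw [Matrix.mul_smul, Matrix.mul_smul, Matrix.trace_smul, Complex.real_smul]
        have e2 : Matrix.trace (ρ ξ * (R * R)) =
            ∑ m, (cc m : ℂ) * Matrix.trace (ρ ξ * (v m * R)) := by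
          nth_rewrite 1 [← hcc]
          rw [Matrix.sum_mul, Matrix.mul_sum, Matrix.trace_sum]
          refine Finset.sum_congr rfl (fun m _ => ?_)
          rw [Matrix.smul_mul, Matrix.mul_smul, Matrix.trace_smul, Complex.real_smul]
        have e3 : Matrix.trace (ρ ξ * (R * R)) * 2 =
            ∑ m, (cc m : ℂ) * (Matrix.trace (ρ ξ * (R * v m)) +
              Matrix.trace (ρ ξ * (v m * R))) := by
          calc Matrix.trace (ρ ξ * (R * R)) * 2
              = (∑ m, (cc m : ℂ) * Matrix.trace (ρ ξ * (R * v m))) +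
                ∑ m, (cc m : ℂ) * Matrix.trace (ρ ξ * (v m * R)) := by
                rw [← e1, ← e2]; ring
            _ = ∑ m, (cc m : ℂ) * (Matrix.trace (ρ ξ * (R * v m)) +
                Matrix.trace (ρ ξ * (v m * R))) := by
                rw [← Finset.sum_add_distrib]
                exact Finset.sum_congr rfl fun m _ => by ring
        have e4 : Matrix.trace (ρ ξ * (R * R)) * 2 = 0 := by
          rw [e3]
          exact Finset.sum_eq_zero fun m _ => by rw [hzero m, mul_zero]
        have h2 : (2:ℂ) ≠ 0 := by norm_num
        exact (mul_eq_zero.mp e4).resolve_right h2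
      have hR0 : R = 0 := aux_posdef_cancel hPD hRherm hRR
      have h5 : F i = M + ξ i • (1 : Matrix (Fin d) (Fin d) ℂ) := by
        have h6 : F i - (M + ξ i • (1 : Matrix (Fin d) (Fin d) ℂ)) = 0 := by
          rw [← sub_sub, ← hR]
          exact hR0
        exact sub_eq_zero.mp h6
      rw [h5]
      exact (add_sub_cancel_right _ _).symm
end
end

section
/- Let (ρ_ξ)_{ξ∈Ξ} be a smooth model of strictly positive d×d density matrices with SLDs L_{i,ξ} and invertible SLD Fisher matrix G(ξ) with inverse [g^{ij}(ξ)]. Suppose there exist Hermitian matrices F¹,…,Fⁿ such that Σⱼ g^{ij}(ξ)L_{j,ξ} = Fⁱ − ξⁱ·I for all ξ ∈ Ξ and all i. Then for every nonzero u ∈ ℝⁿ and every ε ∈ (0,1) there exists a finite-outcome estimator Π_ε which is locally unbiased at every ξ ∈ Ξ and satisfies, for every ξ ∈ Ξ, uᵀV_ξ(Π_ε)u = (1/(1−ε))·uᵀG(ξ)⁻¹u + (ε/(1−ε))·(Σᵢ uᵢξⁱ)². In particular the family (Π_ε)_{ε∈(0,1)} is a uuᵀ-efficient filtration: lim_{ε↓0}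 uᵀV_ξ(Π_ε)u = uᵀG(ξ)⁻¹u for every ξ ∈ Ξ. -/
open Matrix
open scoped ComplexOrder

noncomputable section

/-- A POVM on a finite set `Ω`: positive semidefinite matrices summing to `I`. -/
def IsPOVM {d : ℕ} {Ω : Type} [Fintype Ω] (π : Ω → Matrix (Fin d) (Fin d) ℂ) : Prop :=
  (∀ ω, (π ω).PosSemidef) ∧ ∑ ω, π ω = 1

/-- Local unbiasedness of the estimator `(π, f)` at `ρ` w.r.t. SLDs `L` and values `c`. -/
def LocUnbiased {d n : ℕ} (ρ : Matrix (Fin d) (Fin d) ℂ)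
    (L : Fin n → Matrix (Fin d) (Fin d) ℂ) (c : Fin n → ℝ)
    {Ω : Type} [Fintype Ω] (π : Ω → Matrix (Fin d) (Fin d) ℂ)
    (f : Ω → Fin n → ℝ) : Prop :=
  ∀ i, Matrix.trace (ρ * ∑ ω, f ω i • π ω) = (c i : ℂ) ∧
    ∀ j, (Matrix.trace (ρ * L j * ∑ ω, f ω i • π ω)).re =
      if i = j then (1 : ℝ) else 0


lemma diag_sum {d : ℕ} (v : Fin d → ℂ) :
    Matrix.diagonal v = ∑ a, v a • Matrix.single a a (1:ℂ) := by
  ext i j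
  by_cases h : i = j <;>
    simp [Matrix.sum_apply, Matrix.single, Matrix.of_apply, h, ite_and]

lemma spectral {d : ℕ} (A : Matrix (Fin d) (Fin d) ℂ) (hA : A.IsHermitian) :
    ∃ (P : Fin d → Matrix (Fin d) (Fin d) ℂ) (ev : Fin d → ℝ),
      (∀ a, (P a).PosSemidef) ∧ (∑ a, P a = 1) ∧ (∑ a, ev a • P a = A) ∧
      (∑ a, (ev a)^2 • P a = A * A) := by
  set U : Matrix (Fin d) (Fin d) ℂ := (hA.eigenvectorUnitary : Matrix (Fin d) (Fin d) ℂ) with hU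
  have hUU : U * star U = 1 := (Matrix.mem_unitaryGroup_iff).mp (hA.eigenvectorUnitary).2
  have hU'U : star U * U = 1 := (Matrix.mem_unitaryGroup_iff').mp (hA.eigenvectorUnitary).2
  set E : Fin d → Matrix (Fin d) (Fin d) ℂ := fun a => Matrix.single a a 1 with hE
  have key : ∀ v : Fin d → ℝ, ∑ a, v a • (U * E a * star U)
      = U * Matrix.diagonal (fun a => (v a : ℂ)) * star U := by
    intro v
    rw [diag_sum, Matrix.mul_sum, Matrix.sum_mul]
    refine Finset.sum_congr rfl fun a _ => ?_
    rw [Matrix.mul_smul, Matrix.smul_mul]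
    ext i j
    simp [E, Complex.real_smul]
  have hmul : ∀ D D' : Matrix (Fin d) (Fin d) ℂ,
      (U * D * star U) * (U * D' * star U) = U * (D * D') * star U := by
    intro D D'
    calc (U * D * star U) * (U * D' * star U)
        = U * (D * ((star U * U) * (D' * star U))) := by simp only [Matrix.mul_assoc]
      _ = U * (D * D') * star U := by rw [hU'U, Matrix.one_mul]; simp only [Matrix.mul_assoc]
  have hEmul : ∀ a, E a * E a = E a := by
    intro a; simp [hE, Matrix.single_mul_single_same]
  have hEherm : ∀ a, (E a)ᴴ = E a := by
    intro a; ext i j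
    simp [hE, Matrix.single, conjTranspose_apply, and_comm]
  have hspec : A = U * Matrix.diagonal (fun a => ((hA.eigenvalues a : ℝ) : ℂ)) * star U :=
    hA.spectral_theorem
  refine ⟨fun a => U * E a * star U, hA.eigenvalues, ?_, ?_, ?_, ?_⟩
  · intro a
    show (U * E a * star U).PosSemidef
    have h2 : U * E a * star U = (E a * star U)ᴴ * (E a * star U) := by
      rw [conjTranspose_mul, hEherm, star_eq_conjTranspose, conjTranspose_conjTranspose]
      calc U * E a * Uᴴ = U * (E a * E a) * Uᴴ := by rw [hEmul]
        _ = U * E a * (E a * Uᴴ) := by simp only [Matrix.mul_assoc]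
    rw [h2]
    exact posSemidef_conjTranspose_mul_self _
  · have h := key (fun _ => 1)
    simp only [one_smul] at h
    rw [h]
    simp [Matrix.diagonal_one, hUU]
  · rw [key hA.eigenvalues]; exact hspec.symm
  · rw [key (fun a => hA.eigenvalues a ^ 2)]
    have hd : (Matrix.diagonal (fun a => ((hA.eigenvalues a ^ 2 : ℝ) : ℂ)))
        = Matrix.diagonal (fun a => ((hA.eigenvalues a : ℝ) : ℂ))
          * Matrix.diagonal (fun a => ((hA.eigenvalues a : ℝ) : ℂ)) := by
      rw [Matrix.diagonal_mul_diagonal]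
      refine congrArg Matrix.diagonal ?_
      funext a; push_cast; ring
    rw [hd, ← hmul, ← hspec]

lemma isHermitian_real_smul {d : ℕ} {M : Matrix (Fin d) (Fin d) ℂ} (hM : M.IsHermitian)
    (c : ℝ) : (c • M).IsHermitian := by
  unfold Matrix.IsHermitian
  ext i j
  simp only [conjTranspose_apply, Matrix.smul_apply, star_smul, star_trivial]
  rw [← conjTranspose_apply, hM]

lemma posSemidef_real_smul {d : ℕ} {M : Matrix (Fin d) (Fin d) ℂ} (hM : M.PosSemidef)
    {c : ℝ} (hc : 0 ≤ c) : (c • M).PosSemidef := by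
  refine posSemidef_iff_dotProduct_mulVec.mpr ⟨isHermitian_real_smul hM.1 c, fun x => ?_⟩
  have h := (posSemidef_iff_dotProduct_mulVec.mp hM).2 x
  have hcM : (c • M) = (c : ℂ) • M := by
    ext i j
    simp [Complex.real_smul]
  have : star x ⬝ᵥ (c • M) *ᵥ x = (c : ℂ) * (star x ⬝ᵥ M *ᵥ x) := by
    rw [hcM, ← smul_eq_mul, ← dotProduct_smul, smul_mulVec]
  rw [this]
  exact mul_nonneg (by simp [Complex.le_def, hc]) h

lemma herm_sum {m d : ℕ} (c : Fin m → ℝ) (H : Fin m → Matrix (Fin d) (Fin d) ℂ)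
    (h : ∀ i, (H i).IsHermitian) : (∑ i, c i • H i).IsHermitian := by
  unfold Matrix.IsHermitian
  rw [Matrix.conjTranspose_sum]
  exact Finset.sum_congr rfl fun i _ => isHermitian_real_smul (h i) (c i)

lemma traceL_zero {d n : ℕ} (Ξ : Set (Fin n → ℝ)) (hΞopen : IsOpen Ξ)
    (ρ : (Fin n → ℝ) → Matrix (Fin d) (Fin d) ℂ)
    (hρ1 : ∀ ξ ∈ Ξ, (ρ ξ).trace = 1)
    (L : (Fin n → ℝ) → Fin n → Matrix (Fin d) (Fin d) ℂ)
    (hLsld : ∀ ξ ∈ Ξ, ∀ i, ∀ a b : Fin d,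
      HasDerivAt (fun t => ρ (Function.update ξ i t) a b)
        ((jprod (ρ ξ) (L ξ i)) a b) (ξ i))
    (ξ : Fin n → ℝ) (hξ : ξ ∈ Ξ) (i : Fin n) :
    Matrix.trace (ρ ξ * L ξ i) = 0 := by
  have hcont : Continuous (fun t : ℝ => Function.update ξ i t) := by
    apply continuous_pi
    intro j
    simp only [Function.update_apply]
    by_cases h : j = i
    · simp only [h, if_pos rfl]; exact continuous_id
    · simp only [h, if_neg h]; exact continuous_const
  have hderiv : HasDerivAt (fun t => (ρ (Function.update ξ i t)).trace)
      ((jprod (ρ ξ) (L ξ i)).trace) (ξ i) := by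
    simp only [Matrix.trace, Matrix.diag]
    exact HasDerivAt.fun_sum fun a _ => hLsld ξ hξ i a a
  have heq : (fun t => (ρ (Function.update ξ i t)).trace) =ᶠ[nhds (ξ i)] fun _ => (1:ℂ) := by
    have hmem : (fun t : ℝ => Function.update ξ i t) ⁻¹' Ξ ∈ nhds (ξ i) := by
      refine (hΞopen.preimage hcont).mem_nhds ?_
      simp [Set.mem_preimage, Function.update_eq_self, hξ]
    filter_upwards [hmem] with t ht
    exact hρ1 _ ht
  have hzero : HasDerivAt (fun t => (ρ (Function.update ξ i t)).trace) 0 (ξ i) := by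
    exact (hasDerivAt_const (ξ i) (1:ℂ)).congr_of_eventuallyEq heq
  have h0 : (jprod (ρ ξ) (L ξ i)).trace = 0 := hderiv.unique hzero
  have : (jprod (ρ ξ) (L ξ i)).trace = Matrix.trace (ρ ξ * L ξ i) := by
    simp only [jprod, Matrix.trace_smul, Matrix.trace_add]
    rw [Matrix.trace_mul_comm (L ξ i) (ρ ξ)]
    ring_nf
  rwa [this] at h0
/-- If the model satisfies the operator condition
`Σⱼ gⁱʲ(ξ)L_{j,ξ} = Fⁱ − ξⁱI` (e-autoparallel with `ξ` m-affine), then for every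
nonzero `u` and `ε ∈ (0,1)` there is an everywhere locally unbiased estimator `Π_ε` with
`uᵀV_ξ(Π_ε)u = (1/(1−ε))uᵀG(ξ)⁻¹u + (ε/(1−ε))(Σᵢuᵢξⁱ)²`; these form a
`uuᵀ`-efficient filtration. -/
theorem efficient_filtration_exists (d n : ℕ)
    (Ξ : Set (Fin n → ℝ)) (hΞopen : IsOpen Ξ)
    (ρ : (Fin n → ℝ) → Matrix (Fin d) (Fin d) ℂ)
    (hρ : ∀ ξ ∈ Ξ, (ρ ξ).PosDef ∧ (ρ ξ).trace = 1)
    (hinj : Set.InjOn ρ Ξ)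
    (L : (Fin n → ℝ) → Fin n → Matrix (Fin d) (Fin d) ℂ)
    (hLherm : ∀ ξ ∈ Ξ, ∀ i, (L ξ i).IsHermitian)
    (hLsld : ∀ ξ ∈ Ξ, ∀ i, ∀ a b : Fin d,
      HasDerivAt (fun t => ρ (Function.update ξ i t) a b)
        ((jprod (ρ ξ) (L ξ i)) a b) (ξ i))
    (G : (Fin n → ℝ) → Matrix (Fin n) (Fin n) ℝ)
    (hG : ∀ ξ ∈ Ξ, ∀ i j, G ξ i j = (Matrix.trace (ρ ξ * L ξ i * L ξ j)).re)
    (hGinv : ∀ ξ ∈ Ξ, IsUnit (G ξ).det)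
    (F : Fin n → Matrix (Fin d) (Fin d) ℂ) (hFherm : ∀ i, (F i).IsHermitian)
    (hF : ∀ ξ ∈ Ξ, ∀ i, (∑ j, (G ξ)⁻¹ i j • L ξ j) =
      F i - ξ i • (1 : Matrix (Fin d) (Fin d) ℂ)) :
    ∀ u : Fin n → ℝ, u ≠ 0 → ∀ ε : ℝ, 0 < ε → ε < 1 →
      ∃ (Ω : Type) (_ : Fintype Ω)
        (π : Ω → Matrix (Fin d) (Fin d) ℂ) (f : Ω → Fin n → ℝ),
        IsPOVM π ∧
        (∀ ξ ∈ Ξ, LocUnbiased (ρ ξ) (L ξ) ξ π f) ∧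
        (∀ ξ ∈ Ξ,
          (∑ i, ∑ j, u i *
            (∑ ω, (f ω i - ξ i) * (f ω j - ξ j) * (Matrix.trace (ρ ξ * π ω)).re) * u j) =
          (1/(1-ε)) * (u ⬝ᵥ (G ξ)⁻¹.mulVec u) + (ε/(1-ε)) * (∑ i, u i * ξ i)^2) := by
  intro u hu ε hε0 hε1
  obtain ⟨i0, hi0⟩ : ∃ i, u i ≠ 0 := Function.ne_iff.mp hu
  have h1ε : (1:ℝ) - ε ≠ 0 := by linarith
  have h1εpos : (0:ℝ) ≤ 1 - ε := by linarith
  have hn0 : (n:ℝ) ≠ 0 := Nat.cast_ne_zero.mpr i0.pos.ne'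
  have hεn : (0:ℝ) ≤ ε / n := by positivity
  set W : ℝ := ∑ i, u i ^ 2 with hWdef
  have hW : 0 < W :=
    Finset.sum_pos' (fun i _ => sq_nonneg _) ⟨i0, Finset.mem_univ _, by positivity⟩
  have hW0 : W ≠ 0 := ne_of_gt hW
  set Y : Matrix (Fin d) (Fin d) ℂ := ∑ i, u i • F i with hYdef
  have hYherm : Y.IsHermitian := herm_sum u F hFherm
  set N : Fin n → Matrix (Fin d) (Fin d) ℂ := fun k => F k - (u k / W) • Y with hNdef
  have hNherm : ∀ k, (N k).IsHermitian := fun k =>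
    (hFherm k).sub (isHermitian_real_smul hYherm _)
  obtain ⟨P, ev, hPpos, hPsum, hPY, hPY2⟩ := spectral Y hYherm
  choose Q evN hQpos hQsum hQN hQN2 using fun k => spectral (N k) (hNherm k)
  set π : Option (Fin n) × Fin d → Matrix (Fin d) (Fin d) ℂ :=
    fun ω => Option.elim ω.1 (((1-ε) : ℝ) • P ω.2) (fun k => ((ε/n : ℝ)) • Q k ω.2) with hπdef
  set f : Option (Fin n) × Fin d → Fin n → ℝ :=
    fun ω i => Option.elim ω.1 (u i * ev ω.2 / ((1-ε) * W))
      (fun k => ((if i = k then (1:ℝ) else 0) - u i * u k / W) * (evN k ω.2 * (n : ℝ) / ε))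
    with hfdef
  refine ⟨Option (Fin n) × Fin d, inferInstance, π, f, ?_, ?_, ?_⟩
  · -- POVM
    constructor
    · rintro ⟨o, a⟩
      cases o with
      | none => exact posSemidef_real_smul (hPpos a) h1εpos
      | some k => exact posSemidef_real_smul (hQpos k a) hεn
    · rw [Fintype.sum_prod_type, Fintype.sum_option]
      have h1 : (∑ a, π (none, a)) = ((1-ε : ℝ)) • (1 : Matrix (Fin d) (Fin d) ℂ) := by
        simp only [hπdef, Option.elim]
        rw [← Finset.smul_sum, hPsum]
      have h2 : ∀ k, (∑ a, π (some k, a)) = ((ε/n : ℝ)) • (1 : Matrix (Fin d) (Fin d) ℂ) := by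
        intro k
        simp only [hπdef, Option.elim]
        rw [← Finset.smul_sum, hQsum]
      rw [h1]
      have h3 : (∑ k : Fin n, ∑ a, π (some k, a)) = (ε : ℝ) • (1 : Matrix (Fin d) (Fin d) ℂ) := by
        simp only [h2]
        rw [Finset.sum_const, Finset.card_univ, Fintype.card_fin, ← Nat.cast_smul_eq_nsmul ℝ,
          smul_smul]
        congr 1
        field_simp
      rw [h3, ← add_smul]
      simp
  · -- local unbiasedness
    have hsumN : (∑ k, u k • N k) = 0 := by
      simp only [hNdef, smul_sub, Finset.sum_sub_distrib]
      have e1 : (∑ k, u k • ((u k / W) • Y)) = Y := by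
        have : ∀ k : Fin n, u k • ((u k / W) • Y) = (u k ^ 2 / W) • Y := by
          intro k; rw [smul_smul]; congr 1; ring
        simp only [this]
        rw [← Finset.sum_smul]
        have : (∑ k, u k ^ 2 / W) = 1 := by
          rw [← Finset.sum_div, ← hWdef]
          field_simp
        rw [this, one_smul]
      rw [e1, ← hYdef, sub_self]
    have hA : ∀ i, (∑ ω : Option (Fin n) × Fin d, f ω i • π ω) = F i := by
      intro i
      rw [Fintype.sum_prod_type, Fintype.sum_option]
      have h1 : (∑ a, f (none, a) i • π (none, a)) = (u i / W) • Y := by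
        simp only [hπdef, hfdef, Option.elim]
        rw [← hPY, Finset.smul_sum]
        refine Finset.sum_congr rfl fun a _ => ?_
        rw [smul_smul, smul_smul]
        congr 1
        field_simp
      have h2 : ∀ k, (∑ a, f (some k, a) i • π (some k, a))
          = ((if i = k then (1:ℝ) else 0) - u i * u k / W) • N k := by
        intro k
        simp only [hπdef, hfdef, Option.elim]
        rw [← hQN k, Finset.smul_sum]
        refine Finset.sum_congr rfl fun a _ => ?_
        rw [smul_smul, smul_smul]
        congr 1
        field_simp
      rw [h1, Finset.sum_congr rfl (fun k _ => h2 k)]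
      have h4 : (∑ k, ((if i = k then (1:ℝ) else 0) - u i * u k / W) • N k) = N i := by
        have e : ∀ k, ((if i = k then (1:ℝ) else 0) - u i * u k / W) • N k
            = (if i = k then (1:ℝ) else 0) • N k - (u i / W) • (u k • N k) := by
          intro k
          rw [sub_smul, smul_smul]
          congr 2
          ring
        simp only [e]
        rw [Finset.sum_sub_distrib, ← Finset.smul_sum, hsumN, smul_zero, sub_zero]
        rw [Finset.sum_eq_single i (fun k _ hk => by simp [Ne.symm hk]) (by simp)]
        simp
      rw [h4]
      show (u i / W) • Y + (F i - (u i / W) • Y) = F i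
      abel
    intro ξ hξ
    have htrρ : (ρ ξ).trace = 1 := (hρ ξ hξ).2
    have hL0 : ∀ j, Matrix.trace (ρ ξ * L ξ j) = 0 := fun j =>
      traceL_zero Ξ hΞopen ρ (fun ζ hζ => (hρ ζ hζ).2) L hLsld ξ hξ j
    have htrF : ∀ i, Matrix.trace (ρ ξ * F i) = (ξ i : ℂ) := by
      intro i
      have e : ρ ξ * F i = ρ ξ * (∑ j, (G ξ)⁻¹ i j • L ξ j) + ξ i • (ρ ξ) := by
        rw [hF ξ hξ i, Matrix.mul_sub, Matrix.mul_smul, Matrix.mul_one]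
        abel
      rw [e, trace_add, Matrix.mul_sum, trace_sum]
      simp only [Matrix.mul_smul, trace_smul, hL0, smul_zero, Finset.sum_const_zero, zero_add,
        htrρ]
      simp [Complex.real_smul]
    have hGsym : ∀ i j, G ξ i j = G ξ j i := by
      intro i j
      rw [hG ξ hξ, hG ξ hξ]
      have hct : (ρ ξ * L ξ j * L ξ i)ᴴ = L ξ i * L ξ j * ρ ξ := by
        rw [conjTranspose_mul, conjTranspose_mul, hLherm ξ hξ i, hLherm ξ hξ j,
          (hρ ξ hξ).1.1, Matrix.mul_assoc]
      have key : Matrix.trace (ρ ξ * L ξ i * L ξ j)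
          = star (Matrix.trace (ρ ξ * L ξ j * L ξ i)) := by
        calc Matrix.trace (ρ ξ * L ξ i * L ξ j)
            = Matrix.trace (L ξ i * L ξ j * ρ ξ) := by
              rw [Matrix.mul_assoc, trace_mul_comm]
          _ = Matrix.trace ((ρ ξ * L ξ j * L ξ i)ᴴ) := by rw [hct]
          _ = star (Matrix.trace (ρ ξ * L ξ j * L ξ i)) := trace_conjTranspose _
      rw [key]
      simp
    have hGinvG : (G ξ)⁻¹ * G ξ = 1 := Matrix.nonsing_inv_mul (G ξ) (hGinv ξ hξ)
    have hLF : ∀ i j, (Matrix.trace (ρ ξ * L ξ j * F i)).re = if i = j then (1:ℝ) else 0 := by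
      intro i j
      have e : ρ ξ * L ξ j * F i
          = ρ ξ * L ξ j * (∑ k, (G ξ)⁻¹ i k • L ξ k) + ξ i • (ρ ξ * L ξ j) := by
        rw [hF ξ hξ i, Matrix.mul_sub, Matrix.mul_smul, Matrix.mul_one]
        abel
      rw [e, trace_add, Matrix.mul_sum, trace_sum]
      simp only [Matrix.mul_smul, trace_smul, Complex.add_re, Complex.re_sum, Complex.smul_re,
        hL0 j, smul_zero, Complex.zero_re, add_zero, smul_eq_mul]
      have : ∀ k, ((G ξ)⁻¹ i k) * (Matrix.trace (ρ ξ * L ξ j * L ξ k)).re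
          = (G ξ)⁻¹ i k * G ξ k j := by
        intro k
        rw [← hG ξ hξ j k, hGsym j k]
      rw [Finset.sum_congr rfl fun k _ => this k, ← Matrix.mul_apply, hGinvG, Matrix.one_apply]
    intro i
    rw [hA i]
    exact ⟨htrF i, fun j => hLF i j⟩
  · -- variance
    intro ξ hξ
    have htrρ : (ρ ξ).trace = 1 := (hρ ξ hξ).2
    have hL0 : ∀ j, Matrix.trace (ρ ξ * L ξ j) = 0 := fun j =>
      traceL_zero Ξ hΞopen ρ (fun ζ hζ => (hρ ζ hζ).2) L hLsld ξ hξ j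
    have hGinvG : (G ξ)⁻¹ * G ξ = 1 := Matrix.nonsing_inv_mul (G ξ) (hGinv ξ hξ)
    have htrF : ∀ i, Matrix.trace (ρ ξ * F i) = (ξ i : ℂ) := by
      intro i
      have e : ρ ξ * F i = ρ ξ * (∑ j, (G ξ)⁻¹ i j • L ξ j) + ξ i • (ρ ξ) := by
        rw [hF ξ hξ i, Matrix.mul_sub, Matrix.mul_smul, Matrix.mul_one]
        abel
      rw [e, trace_add, Matrix.mul_sum, trace_sum]
      simp only [Matrix.mul_smul, trace_smul, hL0, smul_zero, Finset.sum_const_zero, zero_add,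
        htrρ]
      simp [Complex.real_smul]
    set s : ℝ := ∑ i, u i * ξ i with hsdef
    set γ : ℝ := u ⬝ᵥ (G ξ)⁻¹.mulVec u with hγdef
    have hT0 : ∑ a, (Matrix.trace (ρ ξ * P a)).re = 1 := by
      rw [← Complex.re_sum, ← trace_sum, ← Matrix.mul_sum, hPsum, Matrix.mul_one, htrρ]
      simp
    have htrY : Matrix.trace (ρ ξ * Y) = (s : ℂ) := by
      rw [hYdef, Matrix.mul_sum, trace_sum]
      simp only [Matrix.mul_smul, trace_smul, htrF, Complex.real_smul]
      rw [hsdef]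
      push_cast
      ring
    have hT1 : ∑ a, ev a * (Matrix.trace (ρ ξ * P a)).re = s := by
      have e : ∀ a : Fin d, ev a * (Matrix.trace (ρ ξ * P a)).re
          = (Matrix.trace (ρ ξ * (ev a • P a))).re := by
        intro a
        simp [Matrix.mul_smul, trace_smul, Complex.smul_re, smul_eq_mul]
      rw [Finset.sum_congr rfl fun a _ => e a, ← Complex.re_sum, ← trace_sum,
        ← Matrix.mul_sum, hPY, htrY]
      simp
    set Lu : Matrix (Fin d) (Fin d) ℂ := Y - s • (1 : Matrix (Fin d) (Fin d) ℂ) with hLudef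
    have hLu_sum : Lu = ∑ l, u l • (F l - ξ l • (1 : Matrix (Fin d) (Fin d) ℂ)) := by
      simp only [smul_sub, Finset.sum_sub_distrib]
      rw [hLudef, hYdef]
      congr 1
      have : ∀ l : Fin n, u l • (ξ l • (1 : Matrix (Fin d) (Fin d) ℂ))
          = (u l * ξ l) • (1 : Matrix (Fin d) (Fin d) ℂ) := fun l => smul_smul _ _ _
      rw [Finset.sum_congr rfl fun l _ => this l, ← Finset.sum_smul, hsdef]
    have htrLu : Matrix.trace (ρ ξ * Lu) = 0 := by
      rw [hLudef, Matrix.mul_sub, Matrix.mul_smul, Matrix.mul_one, trace_sub, trace_smul,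
        htrY, htrρ]
      simp [Complex.real_smul]
    have hKL : ∀ l j, (Matrix.trace (ρ ξ * (F l - ξ l • (1 : Matrix (Fin d) (Fin d) ℂ))
        * L ξ j)).re = if l = j then (1:ℝ) else 0 := by
      intro l j
      rw [← hF ξ hξ l, Matrix.mul_sum, Matrix.sum_mul]
      have e : ∀ m, ρ ξ * ((G ξ)⁻¹ l m • L ξ m) * L ξ j
          = (G ξ)⁻¹ l m • (ρ ξ * L ξ m * L ξ j) := by
        intro m
        rw [Matrix.mul_smul, Matrix.smul_mul]
      rw [Finset.sum_congr rfl fun m _ => e m, trace_sum]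
      simp only [trace_smul, Complex.re_sum, Complex.smul_re, smul_eq_mul]
      have e2 : ∀ m, (G ξ)⁻¹ l m * (Matrix.trace (ρ ξ * L ξ m * L ξ j)).re
          = (G ξ)⁻¹ l m * G ξ m j := by
        intro m
        rw [← hG ξ hξ m j]
      rw [Finset.sum_congr rfl fun m _ => e2 m, ← Matrix.mul_apply, hGinvG, Matrix.one_apply]
    have hLuL : ∀ j, (Matrix.trace (ρ ξ * Lu * L ξ j)).re = u j := by
      intro j
      rw [hLu_sum, Matrix.mul_sum, Matrix.sum_mul]
      have e : ∀ l, ρ ξ * (u l • (F l - ξ l • (1 : Matrix (Fin d) (Fin d) ℂ))) * L ξ j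
          = u l • (ρ ξ * (F l - ξ l • (1 : Matrix (Fin d) (Fin d) ℂ)) * L ξ j) := by
        intro l
        rw [Matrix.mul_smul, Matrix.smul_mul]
      rw [Finset.sum_congr rfl fun l _ => e l, trace_sum]
      simp only [trace_smul, Complex.re_sum, Complex.smul_re, smul_eq_mul, hKL]
      rw [Finset.sum_eq_single j (fun l _ hl => by simp [hl]) (by simp)]
      simp
    have hLuK : ∀ i, (Matrix.trace (ρ ξ * Lu
        * (F i - ξ i • (1 : Matrix (Fin d) (Fin d) ℂ)))).re = (G ξ)⁻¹.mulVec u i := by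
      intro i
      rw [← hF ξ hξ i, Matrix.mul_sum]
      have e : ∀ j, ρ ξ * Lu * ((G ξ)⁻¹ i j • L ξ j)
          = (G ξ)⁻¹ i j • (ρ ξ * Lu * L ξ j) := fun j => Matrix.mul_smul _ _ _
      rw [Finset.sum_congr rfl fun j _ => e j, trace_sum]
      simp only [trace_smul, Complex.re_sum, Complex.smul_re, smul_eq_mul, hLuL]
      simp [Matrix.mulVec, dotProduct]
    have hLu2 : (Matrix.trace (ρ ξ * (Lu * Lu))).re = γ := by
      have e : ρ ξ * (Lu * Lu)
          = ∑ i, u i • (ρ ξ * Lu * (F i - ξ i • (1 : Matrix (Fin d) (Fin d) ℂ))) := by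
        nth_rewrite 2 [hLu_sum]
        rw [← Matrix.mul_assoc, Matrix.mul_sum]
        exact Finset.sum_congr rfl fun i _ => Matrix.mul_smul _ _ _
      rw [e, trace_sum]
      simp only [trace_smul, Complex.re_sum, Complex.smul_re, smul_eq_mul, hLuK]
      rw [hγdef]
      simp [dotProduct]
    have hYY : (Matrix.trace (ρ ξ * (Y * Y))).re = γ + s^2 := by
      have hY : Y = Lu + s • (1 : Matrix (Fin d) (Fin d) ℂ) := by
        rw [hLudef]
        abel
      have e : Y * Y = Lu * Lu + s • Lu + s • Lu + (s * s) • (1 : Matrix (Fin d) (Fin d) ℂ) := by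
        rw [hY]
        simp only [Matrix.add_mul, Matrix.mul_add, Matrix.smul_mul, Matrix.mul_smul,
          Matrix.one_mul, Matrix.mul_one, smul_smul, smul_add]
        abel
      rw [e]
      simp only [Matrix.mul_add, trace_add, Matrix.mul_smul, trace_smul, Matrix.mul_one,
        Complex.add_re, Complex.smul_re, smul_eq_mul, htrLu, htrρ, Complex.zero_re, mul_zero,
        add_zero, Complex.one_re, mul_one, hLu2]
      ring
    have hT2 : ∑ a, (ev a)^2 * (Matrix.trace (ρ ξ * P a)).re = γ + s^2 := by
      have e : ∀ a : Fin d, (ev a)^2 * (Matrix.trace (ρ ξ * P a)).re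
          = (Matrix.trace (ρ ξ * ((ev a)^2 • P a))).re := by
        intro a
        rw [Matrix.mul_smul, trace_smul, Complex.smul_re, smul_eq_mul]
      rw [Finset.sum_congr rfl fun a _ => e a, ← Complex.re_sum, ← trace_sum,
        ← Matrix.mul_sum, hPY2, hYY]
    have hTQ0 : ∀ k, ∑ a, (Matrix.trace (ρ ξ * Q k a)).re = 1 := by
      intro k
      rw [← Complex.re_sum, ← trace_sum, ← Matrix.mul_sum, hQsum k, Matrix.mul_one, htrρ]
      simp
    have step1 : (∑ i, ∑ j, u i *
          (∑ ω : Option (Fin n) × Fin d,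
            (f ω i - ξ i) * (f ω j - ξ j) * (Matrix.trace (ρ ξ * π ω)).re) * u j)
        = ∑ ω : Option (Fin n) × Fin d, (∑ i, u i * (f ω i - ξ i)) *
            (∑ j, u j * (f ω j - ξ j)) * (Matrix.trace (ρ ξ * π ω)).re := by
      calc (∑ i, ∑ j, u i * (∑ ω : Option (Fin n) × Fin d,
              (f ω i - ξ i) * (f ω j - ξ j) * (Matrix.trace (ρ ξ * π ω)).re) * u j)
          = ∑ i, ∑ j, ∑ ω : Option (Fin n) × Fin d,
              u i * ((f ω i - ξ i) * (f ω j - ξ j) * (Matrix.trace (ρ ξ * π ω)).re) * u j := by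
            refine Finset.sum_congr rfl fun i _ => Finset.sum_congr rfl fun j _ => ?_
            rw [Finset.mul_sum, Finset.sum_mul]
        _ = ∑ ω : Option (Fin n) × Fin d, ∑ i, ∑ j,
              u i * ((f ω i - ξ i) * (f ω j - ξ j) * (Matrix.trace (ρ ξ * π ω)).re) * u j := by
            rw [Finset.sum_congr rfl fun i (_ : i ∈ Finset.univ) => Finset.sum_comm]
            exact Finset.sum_comm
        _ = ∑ ω : Option (Fin n) × Fin d, (∑ i, u i * (f ω i - ξ i)) *
              (∑ j, u j * (f ω j - ξ j)) * (Matrix.trace (ρ ξ * π ω)).re := by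
            refine Finset.sum_congr rfl fun ω _ => ?_
            rw [Finset.sum_mul_sum, Finset.sum_mul]
            refine Finset.sum_congr rfl fun i _ => ?_
            rw [Finset.sum_mul]
            refine Finset.sum_congr rfl fun j _ => ?_
            ring
    have hcnone : ∀ a, (∑ i, u i * (f (none, a) i - ξ i)) = ev a / (1-ε) - s := by
      intro a
      simp only [hfdef, Option.elim]
      have e : ∀ i, u i * (u i * ev a / ((1-ε) * W) - ξ i)
          = u i ^ 2 * (ev a / ((1-ε) * W)) - u i * ξ i := by
        intro i; ring
      rw [Finset.sum_congr rfl fun i _ => e i, Finset.sum_sub_distrib, ← Finset.sum_mul,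
        ← hWdef, ← hsdef]
      field_simp
    have hcsome : ∀ k a, (∑ i, u i * (f (some k, a) i - ξ i)) = -s := by
      intro k a
      simp only [hfdef, Option.elim]
      have e : ∀ i, u i * (((if i = k then (1:ℝ) else 0) - u i * u k / W)
            * (evN k a * (n:ℝ) / ε) - ξ i)
          = (if i = k then (1:ℝ) else 0) * u i * (evN k a * (n:ℝ) / ε)
            - u i ^ 2 * (u k / W * (evN k a * (n:ℝ) / ε)) - u i * ξ i := by
        intro i; ring
      rw [Finset.sum_congr rfl fun i _ => e i, Finset.sum_sub_distrib, Finset.sum_sub_distrib]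
      have hs1 : (∑ i, (if i = k then (1:ℝ) else 0) * u i * (evN k a * (n:ℝ) / ε))
          = u k * (evN k a * (n:ℝ) / ε) := by
        rw [Finset.sum_eq_single k (fun i _ hi => by simp [hi]) (by simp)]
        simp
      have hs2 : (∑ x, u x ^ 2 * (u k / W * (evN k a * (n:ℝ) / ε)))
          = u k * (evN k a * (n:ℝ) / ε) := by
        rw [← Finset.sum_mul, ← hWdef]
        field_simp
      rw [hs1, hs2, ← hsdef]
      ring
    have htnone : ∀ a, (Matrix.trace (ρ ξ * π (none, a))).re
        = (1-ε) * (Matrix.trace (ρ ξ * P a)).re := by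
      intro a
      simp only [hπdef, Option.elim]
      rw [Matrix.mul_smul, trace_smul, Complex.smul_re, smul_eq_mul]
    have htsome : ∀ k a, (Matrix.trace (ρ ξ * π (some k, a))).re
        = (ε / n) * (Matrix.trace (ρ ξ * Q k a)).re := by
      intro k a
      simp only [hπdef, Option.elim]
      rw [Matrix.mul_smul, trace_smul, Complex.smul_re, smul_eq_mul]
    rw [step1, Fintype.sum_prod_type, Fintype.sum_option]
    have hnone_sum : (∑ a, (∑ i, u i * (f (none, a) i - ξ i)) *
          (∑ j, u j * (f (none, a) j - ξ j)) * (Matrix.trace (ρ ξ * π (none, a))).re)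
        = (1/(1-ε)) * (γ + s^2) - 2*s*s + (1-ε)*s^2 := by
      have e : ∀ a, (∑ i, u i * (f (none, a) i - ξ i)) *
            (∑ j, u j * (f (none, a) j - ξ j)) * (Matrix.trace (ρ ξ * π (none, a))).re
          = (1/(1-ε)) * ((ev a)^2 * (Matrix.trace (ρ ξ * P a)).re)
            - 2*s*(ev a * (Matrix.trace (ρ ξ * P a)).re)
            + ((1-ε)*s^2) * (Matrix.trace (ρ ξ * P a)).re := by
        intro a
        rw [hcnone a, htnone a]
        field_simp
        ring
      rw [Finset.sum_congr rfl fun a _ => e a, Finset.sum_add_distrib,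
        Finset.sum_sub_distrib, ← Finset.mul_sum, ← Finset.mul_sum, ← Finset.mul_sum,
        hT2, hT1, hT0]
      ring
    have hsome_sum : (∑ k, ∑ a, (∑ i, u i * (f (some k, a) i - ξ i)) *
          (∑ j, u j * (f (some k, a) j - ξ j)) * (Matrix.trace (ρ ξ * π (some k, a))).re)
        = ε * s^2 := by
      have e : ∀ k a, (∑ i, u i * (f (some k, a) i - ξ i)) *
            (∑ j, u j * (f (some k, a) j - ξ j)) * (Matrix.trace (ρ ξ * π (some k, a))).re
          = s^2 * ((ε/n) * (Matrix.trace (ρ ξ * Q k a)).re) := by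
        intro k a
        rw [hcsome k a, htsome k a]
        ring
      have e2 : ∀ k, (∑ a, s^2 * ((ε/n) * (Matrix.trace (ρ ξ * Q k a)).re))
          = s^2 * (ε/n) := by
        intro k
        rw [← Finset.mul_sum]
        congr 1
        rw [← Finset.mul_sum, hTQ0 k, mul_one]
      rw [Finset.sum_congr rfl fun k (_ : k ∈ Finset.univ) =>
        Finset.sum_congr rfl fun a _ => e k a]
      rw [Finset.sum_congr rfl fun k _ => e2 k, Finset.sum_const, Finset.card_univ,
        Fintype.card_fin, nsmul_eq_mul]
      field_simp
    rw [hnone_sum, hsome_sum]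
    field_simp
    ring
end
end

section
/- Let (ρ_ξ)_{ξ∈Ξ} be a smooth model of strictly positive d×d density matrices with SLDs L_{i,ξ} and invertible SLD Fisher matrix G(ξ) with inverse [g^{ij}(ξ)]. Fix i ∈ {1,…,n} and suppose there is a family (Π_ε)_{ε>0} of finite-outcome estimators such that each Π_ε is locally unbiased at every ξ ∈ Ξ and lim_{ε↓0} (V_ξ(Π_ε))_{ii} = (G(ξ)⁻¹)_{ii} for every ξ ∈ Ξ. Then there exists a Hermitian matrix Fⁱ such that Σⱼ g^{ij}(ξ)L_{j,ξ} = Fⁱ − ξⁱ·I for all ξ ∈ Ξ. Consequently, if such a family exists for every i ∈ {1,…,n}, then the model is e-autoparallel with ξ m-affine in the operator sense: there exist Hermitian F¹,…,Fⁿ with Σⱼ g^{ij}(ξ)L_{j,ξ} = Fⁱ − ξⁱ·I for all i and ξ. -/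
open Matrix
open scoped ComplexOrder

noncomputable section

private lemma retrace_comm {d : ℕ} {ρ A B : Matrix (Fin d) (Fin d) ℂ}
    (hρ : ρ.IsHermitian) (hA : A.IsHermitian) (hB : B.IsHermitian) :
    (Matrix.trace (ρ * A * B)).re = (Matrix.trace (ρ * B * A)).re := by
  have h : (starRingEnd ℂ) (Matrix.trace (ρ * A * B)) = Matrix.trace (ρ * B * A) := by
    rw [show (starRingEnd ℂ) (Matrix.trace (ρ * A * B)) = star (Matrix.trace (ρ * A * B)) from rfl,
      ← Matrix.trace_conjTranspose, Matrix.conjTranspose_mul, Matrix.conjTranspose_mul,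
      hρ.eq, hA.eq, hB.eq, ← Matrix.mul_assoc, Matrix.trace_mul_cycle, Matrix.mul_assoc]
  have := congrArg Complex.re h
  simpa using (this.symm.trans (Complex.conj_re _)).symm

private lemma trace_CHC_re {d : ℕ} {ρ s : Matrix (Fin d) (Fin d) ℂ}
    (hss : s * s = ρ) (hsh : s.IsHermitian) (C : Matrix (Fin d) (Fin d) ℂ) :
    (Matrix.trace (ρ * (Cᴴ * C))).re = ∑ a, ∑ b, Complex.normSq ((C * s) a b) := by
  have key : Matrix.trace (ρ * (Cᴴ * C)) = Matrix.trace ((C * s)ᴴ * (C * s)) := by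
    rw [Matrix.conjTranspose_mul, hsh.eq, ← hss,
      show s * s * (Cᴴ * C) = s * (s * Cᴴ * C) by noncomm_ring, Matrix.trace_mul_comm]
    noncomm_ring
  rw [key]
  generalize C * s = N
  have : Matrix.trace (Nᴴ * N) =
      ∑ b, ∑ a, ((starRingEnd ℂ) (N a b)) * (N a b) := by
    simp [Matrix.trace, Matrix.mul_apply, Matrix.conjTranspose_apply, Matrix.diag]
  rw [this, Finset.sum_comm]
  simp [← Complex.normSq_eq_conj_mul_self]

private lemma retrace_nonneg {d : ℕ} {ρ M : Matrix (Fin d) (Fin d) ℂ}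
    (hs : ∃ s : Matrix (Fin d) (Fin d) ℂ, s * s = ρ ∧ s.IsHermitian)
    (hM : M.PosSemidef) : 0 ≤ (Matrix.trace (ρ * M)).re := by
  obtain ⟨s, hss, hsh⟩ := hs
  obtain ⟨C, rfl⟩ : ∃ C : Matrix (Fin d) (Fin d) ℂ, M = Cᴴ * C := by
    open scoped MatrixOrder in
    obtain ⟨C, hC⟩ := CStarAlgebra.nonneg_iff_eq_star_mul_self.mp hM.nonneg
    exact ⟨C, by simpa [Matrix.star_eq_conjTranspose] using hC⟩
  rw [trace_CHC_re hss hsh]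
  exact Finset.sum_nonneg fun a _ => Finset.sum_nonneg fun b _ => Complex.normSq_nonneg _

private lemma posSemidef_sum' {d : ℕ} {Ω : Type} [Fintype Ω]
    (g : Ω → Matrix (Fin d) (Fin d) ℂ)
    (h : ∀ ω, (g ω).PosSemidef) : (∑ ω, g ω).PosSemidef := by
  classical
  exact Finset.sum_induction g _ (fun a b ha hb => ha.add hb)
    (Matrix.PosSemidef.zero) (fun ω _ => h ω)

/-- Core bound: `Re Tr ρ Y² ≤ V − gⁱⁱ` for a locally unbiased estimator. -/
private lemma core_bound {d n : ℕ} {ρ : Matrix (Fin d) (Fin d) ℂ}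
    (hρh : ρ.IsHermitian)
    (hs : ∃ s : Matrix (Fin d) (Fin d) ℂ, s * s = ρ ∧ s.IsHermitian)
    {L : Fin n → Matrix (Fin d) (Fin d) ℂ} (hLh : ∀ j, (L j).IsHermitian)
    {G : Matrix (Fin n) (Fin n) ℝ}
    (hG : ∀ j k, G j k = (Matrix.trace (ρ * L j * L k)).re)
    (hGinv : IsUnit G.det) (i : Fin n)
    (hLtr : ∀ j, Matrix.trace (ρ * L j) = 0)
    {Ω : Type} [Fintype Ω] {π : Ω → Matrix (Fin d) (Fin d) ℂ}
    (hπ : ∀ ω, (π ω).PosSemidef) (hπ1 : ∑ ω, π ω = 1)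
    {f : Ω → ℝ} {t : ℝ}
    (h2 : ∀ j, (Matrix.trace (ρ * L j * ∑ ω, f ω • π ω)).re = if i = j then 1 else 0) :
    (Matrix.trace (ρ * (((∑ ω, f ω • π ω) - (t • 1 + ∑ j, G⁻¹ i j • L j)) *
        ((∑ ω, f ω • π ω) - (t • 1 + ∑ j, G⁻¹ i j • L j))))).re ≤
      (∑ ω, (f ω - t) * (f ω - t) * (Matrix.trace (ρ * π ω)).re) - G⁻¹ i i := by
  classical
  set A : Matrix (Fin d) (Fin d) ℂ := ∑ ω, f ω • π ω with hA
  set X : Matrix (Fin d) (Fin d) ℂ := A - t • 1 with hX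
  set K : Matrix (Fin d) (Fin d) ℂ := ∑ j, G⁻¹ i j • L j with hK
  have hAh : A.IsHermitian := by
    rw [Matrix.IsHermitian, hA, Matrix.conjTranspose_sum]
    exact Finset.sum_congr rfl fun ω _ => by
      rw [Matrix.conjTranspose_smul, (hπ ω).1.eq, star_trivial]
  have hXh : X.IsHermitian := by
    rw [Matrix.IsHermitian, hX, Matrix.conjTranspose_sub, hAh.eq,
      Matrix.conjTranspose_smul, Matrix.conjTranspose_one, star_trivial]
  have hKh : K.IsHermitian := by
    rw [Matrix.IsHermitian, hK, Matrix.conjTranspose_sum]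
    exact Finset.sum_congr rfl fun j _ => by
      rw [Matrix.conjTranspose_smul, (hLh j).eq, star_trivial]
  -- ⟨X, L j⟩ = δ_ij
  have hXL : ∀ j, (Matrix.trace (ρ * X * L j)).re = if i = j then 1 else 0 := by
    intro j
    rw [retrace_comm hρh hXh (hLh j)]
    have : ρ * L j * X = ρ * L j * A - t • (ρ * L j) := by
      rw [hX, Matrix.mul_sub, Matrix.mul_smul, Matrix.mul_one]
    rw [this, Matrix.trace_sub, Matrix.trace_smul, hLtr j, smul_zero, sub_zero]
    exact h2 j
  -- ⟨X, K⟩ = gⁱⁱ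
  have hTXK : (Matrix.trace (ρ * (X * K))).re = G⁻¹ i i := by
    have : ρ * (X * K) = ∑ j, G⁻¹ i j • (ρ * X * L j) := by
      rw [hK, Finset.mul_sum, Finset.mul_sum]
      refine Finset.sum_congr rfl fun j _ => ?_
      simp only [Matrix.mul_smul, ← Matrix.mul_assoc]
    rw [this, Matrix.trace_sum]
    have hterm : ∀ j, (Matrix.trace (G⁻¹ i j • (ρ * X * L j))).re
        = G⁻¹ i j * (if i = j then (1:ℝ) else 0) := by
      intro j
      rw [Matrix.trace_smul, Complex.smul_re, hXL j, smul_eq_mul]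
    simp only [Complex.re_sum]
    simp only [hterm]
    simp
  -- ⟨K, K⟩ = gⁱⁱ
  have hGsym : Gᵀ = G := by
    ext j k
    simp only [Matrix.transpose_apply]
    rw [hG, hG]
    exact retrace_comm hρh (hLh k) (hLh j)
  have hGinvsym : ∀ j k, G⁻¹ j k = G⁻¹ k j := by
    intro j k
    conv_lhs => rw [← hGsym]
    rw [← Matrix.transpose_nonsing_inv]
    rfl
  have hTKK : (Matrix.trace (ρ * (K * K))).re = G⁻¹ i i := by
    have hexp : ρ * (K * K) = ∑ j, ∑ k, (G⁻¹ i j * G⁻¹ i k) • (ρ * L j * L k) := by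
      rw [hK, Finset.sum_mul_sum, Finset.mul_sum]
      refine Finset.sum_congr rfl fun j _ => ?_
      rw [Finset.mul_sum]
      refine Finset.sum_congr rfl fun k _ => ?_
      simp only [smul_mul_assoc, Matrix.mul_smul, smul_smul, ← Matrix.mul_assoc]
    rw [hexp, Matrix.trace_sum]
    simp only [Complex.re_sum]
    have : ∀ j, ((Matrix.trace (∑ k, (G⁻¹ i j * G⁻¹ i k) • (ρ * L j * L k)))).re
        = G⁻¹ i j * (if j = i then (1:ℝ) else 0) := by
      intro j
      rw [Matrix.trace_sum]
      simp only [Complex.re_sum]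
      have hterm2 : ∀ k, (Matrix.trace ((G⁻¹ i j * G⁻¹ i k) • (ρ * L j * L k))).re
          = G⁻¹ i j * (G j k * G⁻¹ k i) := by
        intro k
        rw [Matrix.trace_smul, Complex.smul_re, smul_eq_mul, ← hG j k, hGinvsym i k]
        ring
      simp only [hterm2]
      rw [← Finset.mul_sum]
      congr 1
      have := Matrix.mul_nonsing_inv G hGinv
      have h1 : (G * G⁻¹) j i = (1 : Matrix (Fin n) (Fin n) ℝ) j i := by rw [this]
      rw [Matrix.mul_apply] at h1
      rw [h1, Matrix.one_apply]
    simp only [this]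
    simp
  -- variance bound : Re Tr ρ X² ≤ V
  have hXsum : ∑ ω, (f ω - t) • π ω = X := by
    calc ∑ ω, (f ω - t) • π ω = ∑ ω, (f ω • π ω - t • π ω) :=
          Finset.sum_congr rfl fun ω _ => sub_smul _ _ _
      _ = A - t • (∑ ω, π ω) := by
          rw [Finset.sum_sub_distrib, ← Finset.smul_sum, hA]
      _ = X := by rw [hπ1, hX]
  set B : Ω → Matrix (Fin d) (Fin d) ℂ := fun ω => ((f ω - t) : ℝ) • 1 - X with hB
  have hBh : ∀ ω, (B ω)ᴴ = B ω := by
    intro ω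
    rw [hB]
    simp only [Matrix.conjTranspose_sub, Matrix.conjTranspose_smul,
      Matrix.conjTranspose_one, star_trivial, hXh.eq]
  have hMpsd : (∑ ω, B ω * π ω * B ω).PosSemidef := by
    refine posSemidef_sum' _ fun ω => ?_
    have := (hπ ω).conjTranspose_mul_mul_same (B ω)
    rwa [hBh ω] at this
  have hMeq : ∑ ω, B ω * π ω * B ω
      = (∑ ω, ((f ω - t) * (f ω - t)) • π ω) - X * X := by
    have hterm : ∀ ω, B ω * π ω * B ω =
        ((f ω - t) * (f ω - t)) • π ω - (f ω - t) • (π ω * X)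
          - (f ω - t) • (X * π ω) + X * π ω * X := by
      intro ω
      rw [hB]
      simp only [sub_mul, mul_sub, smul_mul_assoc, Matrix.mul_smul, Matrix.one_mul,
        Matrix.mul_one, smul_smul, smul_sub, Matrix.mul_assoc]
      abel
    rw [Finset.sum_congr rfl fun ω _ => hterm ω]
    rw [Finset.sum_add_distrib, Finset.sum_sub_distrib, Finset.sum_sub_distrib]
    have e1 : ∑ ω, (f ω - t) • (π ω * X) = X * X := by
      have : ∀ ω, (f ω - t) • (π ω * X) = ((f ω - t) • π ω) * X := fun ω =>
        (smul_mul_assoc _ _ _).symm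
      rw [Finset.sum_congr rfl fun ω _ => this ω, ← Finset.sum_mul, hXsum]
    have e2 : ∑ ω, (f ω - t) • (X * π ω) = X * X := by
      have : ∀ ω, (f ω - t) • (X * π ω) = X * ((f ω - t) • π ω) := fun ω =>
        (Matrix.mul_smul _ _ _).symm
      rw [Finset.sum_congr rfl fun ω _ => this ω, ← Finset.mul_sum, hXsum]
    have e3 : ∑ ω, X * π ω * X = X * X := by
      rw [← Finset.sum_mul, ← Finset.mul_sum, hπ1, Matrix.mul_one]
    rw [e1, e2, e3]
    abel
  have h0 : 0 ≤ (Matrix.trace (ρ *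
      ((∑ ω, ((f ω - t) * (f ω - t)) • π ω) - X * X))).re := by
    rw [← hMeq]
    exact retrace_nonneg hs hMpsd
  have hV : (Matrix.trace (ρ * (∑ ω, ((f ω - t) * (f ω - t)) • π ω))).re
      = ∑ ω, (f ω - t) * (f ω - t) * (Matrix.trace (ρ * π ω)).re := by
    rw [Finset.mul_sum, Matrix.trace_sum]
    simp only [Complex.re_sum]
    refine Finset.sum_congr rfl fun ω _ => ?_
    rw [Matrix.mul_smul, Matrix.trace_smul, Complex.smul_re, smul_eq_mul]
  have hXXle : (Matrix.trace (ρ * (X * X))).re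
      ≤ ∑ ω, (f ω - t) * (f ω - t) * (Matrix.trace (ρ * π ω)).re := by
    rw [Matrix.mul_sub, Matrix.trace_sub, Complex.sub_re, sub_nonneg, hV] at h0
    exact h0
  have hTKX : (Matrix.trace (ρ * (K * X))).re = G⁻¹ i i := by
    rw [← Matrix.mul_assoc, retrace_comm hρh hKh hXh, Matrix.mul_assoc]
    exact hTXK
  have hYX : A - (t • 1 + K) = X - K := by rw [hX, sub_add_eq_sub_sub]
  rw [hYX]
  have hYexp : ρ * ((X - K) * (X - K))
      = ρ * (X * X) - ρ * (X * K) - ρ * (K * X) + ρ * (K * K) := by noncomm_ring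
  rw [hYexp, Matrix.trace_add, Matrix.trace_sub, Matrix.trace_sub,
    Complex.add_re, Complex.sub_re, Complex.sub_re, hTXK, hTKX, hTKK]
  linarith

/-- If an `eᵢeᵢᵀ`-efficient filtration of everywhere locally unbiased
estimators exists, then there is a Hermitian `Fⁱ` with
`Σⱼ gⁱʲ(ξ)L_{j,ξ} = Fⁱ − ξⁱI` for all `ξ ∈ Ξ`. -/
theorem efficient_filtration_implies_autoparallel (d n : ℕ)
    (Ξ : Set (Fin n → ℝ)) (hΞopen : IsOpen Ξ)
    (ρ : (Fin n → ℝ) → Matrix (Fin d) (Fin d) ℂ)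
    (hρ : ∀ ξ ∈ Ξ, (ρ ξ).PosDef ∧ (ρ ξ).trace = 1)
    (hinj : Set.InjOn ρ Ξ)
    (L : (Fin n → ℝ) → Fin n → Matrix (Fin d) (Fin d) ℂ)
    (hLherm : ∀ ξ ∈ Ξ, ∀ i, (L ξ i).IsHermitian)
    (hLsld : ∀ ξ ∈ Ξ, ∀ i, ∀ a b : Fin d,
      HasDerivAt (fun t => ρ (Function.update ξ i t) a b)
        ((jprod (ρ ξ) (L ξ i)) a b) (ξ i))
    (G : (Fin n → ℝ) → Matrix (Fin n) (Fin n) ℝ)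
    (hG : ∀ ξ ∈ Ξ, ∀ i j, G ξ i j = (Matrix.trace (ρ ξ * L ξ i * L ξ j)).re)
    (hGinv : ∀ ξ ∈ Ξ, IsUnit (G ξ).det)
    (i : Fin n)
    -- the filtration `(Π_ε)_{ε>0}` of finite-outcome estimators
    (Ω : ℝ → Type) (instΩ : ∀ ε, Fintype (Ω ε))
    (π : ∀ ε, Ω ε → Matrix (Fin d) (Fin d) ℂ) (f : ∀ ε, Ω ε → Fin n → ℝ)
    (hPOVM : ∀ ε : ℝ, 0 < ε → IsPOVM (π ε))
    (hunb : ∀ ε : ℝ, 0 < ε → ∀ ξ ∈ Ξ, LocUnbiased (ρ ξ) (L ξ) ξ (π ε) (f ε))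
    (heff : ∀ ξ ∈ Ξ, Filter.Tendsto
      (fun ε => ∑ ω, (f ε ω i - ξ i) * (f ε ω i - ξ i) *
        (Matrix.trace (ρ ξ * π ε ω)).re)
      (nhdsWithin 0 (Set.Ioi 0)) (nhds ((G ξ)⁻¹ i i))) :
    ∃ F : Matrix (Fin d) (Fin d) ℂ, F.IsHermitian ∧
      ∀ ξ ∈ Ξ, (∑ j, (G ξ)⁻¹ i j • L ξ j) =
        F - ξ i • (1 : Matrix (Fin d) (Fin d) ℂ) := by
  classical
  rcases Set.eq_empty_or_nonempty Ξ with hΞ | ⟨ξ₀, hξ₀⟩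
  · exact ⟨0, Matrix.isHermitian_zero, by simp [hΞ]⟩
  -- trace of ρ·L vanishes
  have hLtr : ∀ ξ ∈ Ξ, ∀ j, Matrix.trace (ρ ξ * L ξ j) = 0 := by
    intro ξ hξ j
    have hderiv : HasDerivAt (fun t => ∑ a, ρ (Function.update ξ j t) a a)
        (∑ a, (jprod (ρ ξ) (L ξ j)) a a) (ξ j) :=
      HasDerivAt.fun_sum (fun a _ => hLsld ξ hξ j a a)
    have hev : (fun t => ∑ a, ρ (Function.update ξ j t) a a) =ᶠ[nhds (ξ j)]
        (fun _ => (1 : ℂ)) := by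
      have hcont : Continuous fun t : ℝ => Function.update ξ j t :=
        continuous_const.update j continuous_id
      have hupd : Function.update ξ j (ξ j) = ξ := Function.update_eq_self j ξ
      have hmem : ∀ᶠ t in nhds (ξ j), Function.update ξ j t ∈ Ξ :=
        hcont.continuousAt.eventually_mem (hΞopen.mem_nhds (by rw [hupd]; exact hξ))
      filter_upwards [hmem] with t ht
      have := (hρ _ ht).2
      simpa [Matrix.trace, Matrix.diag] using this
    have h0 : HasDerivAt (fun t => ∑ a, ρ (Function.update ξ j t) a a) 0 (ξ j) :=
      (hasDerivAt_const (ξ j) (1:ℂ)).congr_of_eventuallyEq hev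
    have hD : (∑ a, (jprod (ρ ξ) (L ξ j)) a a) = 0 := hderiv.unique h0
    have htr : Matrix.trace (jprod (ρ ξ) (L ξ j)) = Matrix.trace (ρ ξ * L ξ j) := by
      rw [jprod, Matrix.trace_smul, Matrix.trace_add,
        Matrix.trace_mul_comm (L ξ j) (ρ ξ)]
      rw [smul_eq_mul]
      ring
    rw [← htr]
    simpa [Matrix.trace, Matrix.diag] using hD
  -- the big limit statement
  have hKlim : ∀ ξ ∈ Ξ, Filter.Tendsto (fun ε => ∑ ω, f ε ω i • π ε ω)
      (nhdsWithin 0 (Set.Ioi 0))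
      (nhds (ξ i • (1 : Matrix (Fin d) (Fin d) ℂ) + ∑ j, (G ξ)⁻¹ i j • L ξ j)) := by
    intro ξ hξ
    obtain ⟨hpd, htr1⟩ := hρ ξ hξ
    have hρh : (ρ ξ).IsHermitian := hpd.1
    have hρpsd := hpd.posSemidef
    obtain ⟨s, hss, hsh⟩ : ∃ s : Matrix (Fin d) (Fin d) ℂ, s * s = ρ ξ ∧ s.IsHermitian := by
      open scoped MatrixOrder in
      exact ⟨CFC.sqrt (ρ ξ), CFC.sqrt_mul_sqrt_self _ hρpsd.nonneg,
        (CFC.sqrt_nonneg (ρ ξ)).posSemidef.1⟩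
    have hsex : ∃ s' : Matrix (Fin d) (Fin d) ℂ, s' * s' = ρ ξ ∧ s'.IsHermitian :=
      ⟨s, hss, hsh⟩
    have hsdet : IsUnit s.det := by
      refine isUnit_iff_ne_zero.mpr fun h => ?_
      have h2 : (ρ ξ).det ≠ 0 := hpd.det_pos.ne'
      exact h2 (by rw [← hss, Matrix.det_mul, h, mul_zero])
    set C : Matrix (Fin d) (Fin d) ℂ :=
      ξ i • (1 : Matrix (Fin d) (Fin d) ℂ) + ∑ j, (G ξ)⁻¹ i j • L ξ j with hC
    set Y : ℝ → Matrix (Fin d) (Fin d) ℂ :=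
      fun ε => (∑ ω, f ε ω i • π ε ω) - C with hY
    have hCh : Cᴴ = C := by
      rw [hC, Matrix.conjTranspose_add, Matrix.conjTranspose_smul,
        Matrix.conjTranspose_one, star_trivial, Matrix.conjTranspose_sum]
      congr 1
      exact Finset.sum_congr rfl fun j _ => by
        rw [Matrix.conjTranspose_smul, (hLherm ξ hξ j).eq, star_trivial]
    have key : ∀ ε ∈ Set.Ioi (0:ℝ),
        (∑ a, ∑ b, Complex.normSq ((Y ε * s) a b))
          ≤ (∑ ω, (f ε ω i - ξ i) * (f ε ω i - ξ i) *
              (Matrix.trace (ρ ξ * π ε ω)).re) - (G ξ)⁻¹ i i := by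
      intro ε hε
      obtain ⟨hπpsd, hπ1⟩ := hPOVM ε hε
      have hYh : (Y ε).IsHermitian := by
        rw [Matrix.IsHermitian, hY]
        simp only
        rw [Matrix.conjTranspose_sub, hCh, Matrix.conjTranspose_sum]
        congr 1
        exact Finset.sum_congr rfl fun ω _ => by
          rw [Matrix.conjTranspose_smul, (hπpsd ω).1.eq, star_trivial]
      have h1 : (Matrix.trace (ρ ξ * (Y ε * Y ε))).re
          = ∑ a, ∑ b, Complex.normSq ((Y ε * s) a b) := by
        have h2 := trace_CHC_re hss hsh (Y ε)
        rwa [hYh.eq] at h2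
      rw [← h1]
      have hcb := core_bound hρh hsex (hLherm ξ hξ) (hG ξ hξ) (hGinv ξ hξ) i
        (hLtr ξ hξ) hπpsd hπ1 (f := fun ω => f ε ω i) (t := ξ i)
        (fun j => (hunb ε hε ξ hξ i).2 j)
      simpa only [hY, hC] using hcb
    have hub : Filter.Tendsto (fun ε => (∑ ω, (f ε ω i - ξ i) * (f ε ω i - ξ i) *
        (Matrix.trace (ρ ξ * π ε ω)).re) - (G ξ)⁻¹ i i)
        (nhdsWithin 0 (Set.Ioi 0)) (nhds 0) := by
      have h3 := (heff ξ hξ).sub_const ((G ξ)⁻¹ i i)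
      simpa using h3
    have hsum0 : Filter.Tendsto (fun ε => ∑ a, ∑ b, Complex.normSq ((Y ε * s) a b))
        (nhdsWithin 0 (Set.Ioi 0)) (nhds 0) :=
      tendsto_of_tendsto_of_tendsto_of_le_of_le' tendsto_const_nhds hub
        (Filter.Eventually.of_forall fun ε => Finset.sum_nonneg fun a _ =>
          Finset.sum_nonneg fun b _ => Complex.normSq_nonneg _)
        (eventually_nhdsWithin_of_forall key)
    have hentry : ∀ a b, Filter.Tendsto (fun ε => (Y ε * s) a b)
        (nhdsWithin 0 (Set.Ioi 0)) (nhds 0) := by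
      intro a b
      have h1 : Filter.Tendsto (fun ε => Complex.normSq ((Y ε * s) a b))
          (nhdsWithin 0 (Set.Ioi 0)) (nhds 0) :=
        tendsto_of_tendsto_of_tendsto_of_le_of_le tendsto_const_nhds hsum0
          (fun ε => Complex.normSq_nonneg _)
          (fun ε => by
            calc Complex.normSq ((Y ε * s) a b)
                ≤ ∑ b', Complex.normSq ((Y ε * s) a b') :=
                  Finset.single_le_sum (fun b' _ => Complex.normSq_nonneg _)
                    (Finset.mem_univ b)
              _ ≤ ∑ a', ∑ b', Complex.normSq ((Y ε * s) a' b') :=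
                  Finset.single_le_sum
                    (fun a' _ => Finset.sum_nonneg fun b' _ => Complex.normSq_nonneg _)
                    (Finset.mem_univ a))
      rw [tendsto_zero_iff_norm_tendsto_zero]
      have h2 : Filter.Tendsto (fun ε => Real.sqrt (Complex.normSq ((Y ε * s) a b)))
          (nhdsWithin 0 (Set.Ioi 0)) (nhds 0) := by
        have h3 := (Real.continuous_sqrt.tendsto 0).comp h1
        simpa [Function.comp_def] using h3
      refine h2.congr fun ε => ?_
      rw [Complex.norm_def]
    have hYs : Filter.Tendsto (fun ε => Y ε * s)
        (nhdsWithin 0 (Set.Ioi 0)) (nhds 0) := by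
      refine tendsto_pi_nhds.2 ?_
      intro a
      refine tendsto_pi_nhds.2 ?_
      intro b
      simpa using hentry a b
    have hYlim : Filter.Tendsto Y (nhdsWithin 0 (Set.Ioi 0)) (nhds 0) := by
      have hcont : Continuous fun M : Matrix (Fin d) (Fin d) ℂ => M * s⁻¹ :=
        continuous_id.matrix_mul continuous_const
      have h4 := (hcont.tendsto 0).comp hYs
      simp only [Function.comp_def, Matrix.zero_mul] at h4
      refine h4.congr fun ε => ?_
      rw [Matrix.mul_assoc, Matrix.mul_nonsing_inv s hsdet, Matrix.mul_one]
    have h5 : Filter.Tendsto (fun ε => Y ε + C)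
        (nhdsWithin 0 (Set.Ioi 0)) (nhds (0 + C)) :=
      hYlim.add tendsto_const_nhds
    rw [zero_add] at h5
    refine h5.congr fun ε => ?_
    rw [hY]
    simp only
    rw [sub_add_cancel]
  refine ⟨ξ₀ i • (1 : Matrix (Fin d) (Fin d) ℂ) + ∑ j, (G ξ₀)⁻¹ i j • L ξ₀ j, ?_, ?_⟩
  · rw [Matrix.IsHermitian, Matrix.conjTranspose_add, Matrix.conjTranspose_smul,
      Matrix.conjTranspose_one, star_trivial, Matrix.conjTranspose_sum]
    congr 1
    exact Finset.sum_congr rfl fun j _ => by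
      rw [Matrix.conjTranspose_smul, (hLherm ξ₀ hξ₀ j).eq, star_trivial]
  · intro ξ hξ
    have huniq := tendsto_nhds_unique (hKlim ξ hξ) (hKlim ξ₀ hξ₀)
    rw [← huniq, add_comm, add_sub_cancel_right]
end
end

section
/- Let (ρ_ξ)_{ξ∈Ξ} be a smooth model of strictly positive d×d density matrices with SLDs L_{i,ξ} and invertible SLD Fisher matrix G(ξ). Suppose that for every positive definite matrix W ∈ ℝ^{n×n} there exists a finite-outcome estimator Π_W, locally unbiased at every ξ ∈ Ξ, such that for every ξ ∈ Ξ and every finite-outcome estimator Π' locally unbiased at ξ, tr(W·V_ξ(Π_W)) ≤ tr(W·V_ξ(Π')) (i.e. Π_W is W-efficient). Then for every u ∈ ℝⁿ there exists a family (Π_ε)_{ε>0} of finite-outcome estimators, each locally unbiased at every ξ ∈ Ξ, such that for every ξ ∈ Ξ and every finite-outcome estimator Π' locally unbiased at ξ, limsup_{ε↓0} uᵀV_ξ(Π_ε)u ≤ uᵀV_ξ(Π')u (i.e. (Π_ε) is a uuᵀ-efficient filtration). -/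
open Matrix
open scoped ComplexOrder

noncomputable section

/-- The variance matrix `V_ξ(Π)` of the estimator `(π, f)` at `ρ` with values `c`. -/
def varMat {d n : ℕ} (ρ : Matrix (Fin d) (Fin d) ℂ) (c : Fin n → ℝ)
    {Ω : Type} [Fintype Ω] (π : Ω → Matrix (Fin d) (Fin d) ℂ)
    (f : Ω → Fin n → ℝ) : Matrix (Fin n) (Fin n) ℝ :=
  Matrix.of fun i j =>
    ∑ ω, (f ω i - c i) * (f ω j - c j) * (Matrix.trace (ρ * π ω)).re


/-- The real part of the trace of a product of two PSD matrices is nonnegative. -/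
lemma psd_trace_mul_re_nonneg {d : ℕ} {A B : Matrix (Fin d) (Fin d) ℂ}
    (hA : A.PosSemidef) (hB : B.PosSemidef) : 0 ≤ (Matrix.trace (A * B)).re := by
  obtain ⟨C, rfl⟩ : ∃ C : Matrix (Fin d) (Fin d) ℂ, B = Cᴴ * C := by
    open MatrixOrder in
    exact ⟨CFC.sqrt B, by
      rw [(CFC.sqrt_nonneg B).posSemidef.isHermitian.eq, CFC.sqrt_mul_sqrt_self B hB.nonneg]⟩
  have h1 : Matrix.trace (A * (Cᴴ * C)) = Matrix.trace (C * A * Cᴴ) := by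
    rw [← Matrix.mul_assoc, Matrix.trace_mul_cycle]
  rw [h1]
  have hM := hA.mul_mul_conjTranspose_same C
  have hdiag : ∀ i, 0 ≤ (C * A * Cᴴ) i i := fun i => by
    exact hM.diag_nonneg
  have : (0:ℂ) ≤ Matrix.trace (C * A * Cᴴ) := by
    rw [Matrix.trace]
    exact Finset.sum_nonneg fun i _ => hdiag i
  exact (Complex.le_def.mp this).1

/-- The weight matrix `uuᵀ + ε·I` is positive definite for `ε > 0`. -/
lemma wmat_posdef {n : ℕ} (u : Fin n → ℝ) {ε : ℝ} (hε : 0 < ε) :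
    (Matrix.of fun i j => u i * u j + (if i = j then ε else 0) :
      Matrix (Fin n) (Fin n) ℝ).PosDef := by
  have heq : (Matrix.of fun i j => u i * u j + (if i = j then ε else 0) :
      Matrix (Fin n) (Fin n) ℝ) = Matrix.vecMulVec u u + Matrix.diagonal (fun _ => ε) := by
    ext i j
    simp [Matrix.vecMulVec, Matrix.diagonal, Matrix.of_apply]
  rw [heq]
  have h1 : (Matrix.vecMulVec u u).PosSemidef := by
    have : Matrix.vecMulVec u u = (Matrix.replicateRow Unit u)ᴴ * Matrix.replicateRow Unit u := by
      ext i j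
      simp [Matrix.vecMulVec, Matrix.mul_apply, Matrix.replicateRow, Matrix.conjTranspose_apply]
    rw [this]
    exact Matrix.posSemidef_conjTranspose_mul_self _
  exact Matrix.PosDef.posSemidef_add h1 (Matrix.PosDef.diagonal fun _ => hε)

/-- Trace formula for the weight matrix `uuᵀ + ε·I` against any matrix `V`. -/
lemma trace_wmat_mul {n : ℕ} (u : Fin n → ℝ) (ε : ℝ) (V : Matrix (Fin n) (Fin n) ℝ) :
    Matrix.trace ((Matrix.of fun i j => u i * u j + (if i = j then ε else 0)) * V)
      = (∑ i, ∑ j, u i * V i j * u j) + ε * ∑ i, V i i := by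
  simp only [Matrix.trace, Matrix.diag, Matrix.mul_apply, Matrix.of_apply]
  rw [Finset.sum_comm]
  simp only [add_mul, ite_mul, zero_mul, Finset.sum_add_distrib,
    Finset.sum_ite_eq', Finset.mem_univ, if_true, Finset.mul_sum]
  congr 1
  apply Finset.sum_congr rfl; intro i _; apply Finset.sum_congr rfl; intro j _; ring

/-- The quadratic form of a variance matrix as a sum over outcomes. -/
lemma varMat_quad_eq {d n : ℕ} (ρ : Matrix (Fin d) (Fin d) ℂ) (c u : Fin n → ℝ)
    {Ω : Type} [Fintype Ω] (π : Ω → Matrix (Fin d) (Fin d) ℂ) (f : Ω → Fin n → ℝ) :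
    ∑ i, ∑ j, u i * varMat ρ c π f i j * u j
      = ∑ ω, (∑ i, u i * (f ω i - c i))^2 * (Matrix.trace (ρ * π ω)).re := by
  simp only [varMat, Matrix.of_apply, Finset.mul_sum, Finset.sum_mul]
  calc ∑ i, ∑ j, ∑ ω, u i * ((f ω i - c i) * (f ω j - c j) * (Matrix.trace (ρ * π ω)).re) * u j
      = ∑ i, ∑ ω, ∑ j, u i * ((f ω i - c i) * (f ω j - c j) * (Matrix.trace (ρ * π ω)).re) * u j := by
        exact Finset.sum_congr rfl fun i _ => Finset.sum_comm
    _ = ∑ ω, ∑ i, ∑ j, u i * ((f ω i - c i) * (f ω j - c j) * (Matrix.trace (ρ * π ω)).re) * u j :=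
        Finset.sum_comm
    _ = ∑ ω, (∑ i, u i * (f ω i - c i))^2 * (Matrix.trace (ρ * π ω)).re := by
        refine Finset.sum_congr rfl fun ω _ => ?_
        rw [sq, Finset.sum_mul_sum, Finset.sum_mul]
        refine Finset.sum_congr rfl fun i _ => ?_
        rw [Finset.sum_mul]
        exact Finset.sum_congr rfl fun j _ => by ring

/-- Nonnegativity of the quadratic form of a variance matrix. -/
lemma varMat_quad_nonneg {d n : ℕ} {ρ : Matrix (Fin d) (Fin d) ℂ} (hρ : ρ.PosSemidef)
    (c u : Fin n → ℝ) {Ω : Type} [Fintype Ω] {π : Ω → Matrix (Fin d) (Fin d) ℂ}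
    (hπ : ∀ ω, (π ω).PosSemidef) (f : Ω → Fin n → ℝ) :
    0 ≤ ∑ i, ∑ j, u i * varMat ρ c π f i j * u j := by
  rw [varMat_quad_eq]
  exact Finset.sum_nonneg fun ω _ => mul_nonneg (sq_nonneg _)
    (psd_trace_mul_re_nonneg hρ (hπ ω))

/-- Nonnegativity of the trace of a variance matrix. -/
lemma varMat_trace_nonneg {d n : ℕ} {ρ : Matrix (Fin d) (Fin d) ℂ} (hρ : ρ.PosSemidef)
    (c : Fin n → ℝ) {Ω : Type} [Fintype Ω] {π : Ω → Matrix (Fin d) (Fin d) ℂ}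
    (hπ : ∀ ω, (π ω).PosSemidef) (f : Ω → Fin n → ℝ) :
    0 ≤ ∑ i, varMat ρ c π f i i := by
  refine Finset.sum_nonneg fun i _ => Finset.sum_nonneg fun ω _ => ?_
  exact mul_nonneg (mul_self_nonneg _) (psd_trace_mul_re_nonneg hρ (hπ ω))


/-- If `W`-efficient estimators exist for every positive definite
weight `W`, then for every `u ∈ ℝⁿ` there is a `uuᵀ`-efficient filtration. -/
theorem W_efficient_implies_filtration (d n : ℕ)
    (Ξ : Set (Fin n → ℝ)) (hΞopen : IsOpen Ξ)
    (ρ : (Fin n → ℝ) → Matrix (Fin d) (Fin d) ℂ)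
    (hρ : ∀ ξ ∈ Ξ, (ρ ξ).PosDef ∧ (ρ ξ).trace = 1)
    (hinj : Set.InjOn ρ Ξ)
    (L : (Fin n → ℝ) → Fin n → Matrix (Fin d) (Fin d) ℂ)
    (hLherm : ∀ ξ ∈ Ξ, ∀ i, (L ξ i).IsHermitian)
    (hLsld : ∀ ξ ∈ Ξ, ∀ i, ∀ a b : Fin d,
      HasDerivAt (fun t => ρ (Function.update ξ i t) a b)
        ((jprod (ρ ξ) (L ξ i)) a b) (ξ i))
    (hWeff : ∀ W : Matrix (Fin n) (Fin n) ℝ, W.PosDef →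
      ∃ (Ω : Type) (_ : Fintype Ω)
        (π : Ω → Matrix (Fin d) (Fin d) ℂ) (f : Ω → Fin n → ℝ),
        IsPOVM π ∧ (∀ ξ ∈ Ξ, LocUnbiased (ρ ξ) (L ξ) ξ π f) ∧
        (∀ ξ ∈ Ξ, ∀ (Ω' : Type) (_ : Fintype Ω')
          (π' : Ω' → Matrix (Fin d) (Fin d) ℂ) (f' : Ω' → Fin n → ℝ),
          IsPOVM π' → LocUnbiased (ρ ξ) (L ξ) ξ π' f' →
          Matrix.trace (W * varMat (ρ ξ) ξ π f) ≤
            Matrix.trace (W * varMat (ρ ξ) ξ π' f'))) :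
    ∀ u : Fin n → ℝ,
      ∃ (Ω : ℝ → Type) (_ : ∀ ε, Fintype (Ω ε))
        (π : ∀ ε, Ω ε → Matrix (Fin d) (Fin d) ℂ) (f : ∀ ε, Ω ε → Fin n → ℝ),
        (∀ ε : ℝ, 0 < ε → IsPOVM (π ε)) ∧
        (∀ ε : ℝ, 0 < ε → ∀ ξ ∈ Ξ, LocUnbiased (ρ ξ) (L ξ) ξ (π ε) (f ε)) ∧
        (∀ ξ ∈ Ξ, ∀ (Ω' : Type) (_ : Fintype Ω')
          (π' : Ω' → Matrix (Fin d) (Fin d) ℂ) (f' : Ω' → Fin n → ℝ),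
          IsPOVM π' → LocUnbiased (ρ ξ) (L ξ) ξ π' f' →
          Filter.limsup
            (fun ε => ∑ i, ∑ j, u i * varMat (ρ ξ) ξ (π ε) (f ε) i j * u j)
            (nhdsWithin 0 (Set.Ioi 0)) ≤
          ∑ i, ∑ j, u i * varMat (ρ ξ) ξ π' f' i j * u j) := by
  intro u
  set Wm : ℝ → Matrix (Fin n) (Fin n) ℝ :=
    fun ε => Matrix.of fun i j => u i * u j + (if i = j then ε else 0) with hWm
  have key : ∀ ε : ℝ, ∃ (Ω : Type) (_ : Fintype Ω)
      (π : Ω → Matrix (Fin d) (Fin d) ℂ) (f : Ω → Fin n → ℝ),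
      IsPOVM π ∧ (∀ ξ ∈ Ξ, LocUnbiased (ρ ξ) (L ξ) ξ π f) ∧
      (0 < ε → ∀ ξ ∈ Ξ, ∀ (Ω' : Type) (_ : Fintype Ω')
        (π' : Ω' → Matrix (Fin d) (Fin d) ℂ) (f' : Ω' → Fin n → ℝ),
        IsPOVM π' → LocUnbiased (ρ ξ) (L ξ) ξ π' f' →
        Matrix.trace (Wm ε * varMat (ρ ξ) ξ π f) ≤
          Matrix.trace (Wm ε * varMat (ρ ξ) ξ π' f')) := by
    intro ε
    by_cases hε : 0 < ε
    · obtain ⟨Ω, hΩ, π, f, h1, h2, h3⟩ := hWeff (Wm ε) (wmat_posdef u hε)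
      exact ⟨Ω, hΩ, π, f, h1, h2, fun _ => h3⟩
    · obtain ⟨Ω, hΩ, π, f, h1, h2, _⟩ := hWeff 1 Matrix.PosDef.one
      exact ⟨Ω, hΩ, π, f, h1, h2, fun h => absurd h hε⟩
  choose Ω hΩfin π f hPOVM hLU hEff using key
  refine ⟨Ω, hΩfin, π, f, fun ε _ => hPOVM ε, fun ε _ => hLU ε, ?_⟩
  intro ξ hξ Ω' hΩ' π' f' hP' hLU'
  have hρξ : (ρ ξ).PosSemidef := (hρ ξ hξ).1.posSemidef
  set T : ℝ := ∑ i, ∑ j, u i * varMat (ρ ξ) ξ π' f' i j * u j with hT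
  set C : ℝ := ∑ i, varMat (ρ ξ) ξ π' f' i i with hC
  have hCnn : 0 ≤ C := varMat_trace_nonneg hρξ ξ hP'.1 f'
  set l : Filter ℝ := nhdsWithin 0 (Set.Ioi 0) with hl
  set g : ℝ → ℝ := fun ε => ∑ i, ∑ j, u i * varMat (ρ ξ) ξ (π ε) (f ε) i j * u j with hg
  have hbound : ∀ᶠ ε in l, g ε ≤ T + ε * C := by
    filter_upwards [self_mem_nhdsWithin] with ε hε
    have hεpos : (0:ℝ) < ε := hε
    have heff := hEff ε hεpos ξ hξ Ω' hΩ' π' f' hP' hLU'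
    rw [hWm] at heff
    rw [trace_wmat_mul, trace_wmat_mul] at heff
    have htr : 0 ≤ ∑ i, varMat (ρ ξ) ξ (π ε) (f ε) i i :=
      varMat_trace_nonneg hρξ ξ (hPOVM ε).1 (f ε)
    have hmul : 0 ≤ ε * ∑ i, varMat (ρ ξ) ξ (π ε) (f ε) i i :=
      mul_nonneg hεpos.le htr
    simp only [hg, hT, hC]
    linarith
  have hnn : ∀ᶠ ε in l, (0:ℝ) ≤ g ε :=
    Filter.Eventually.of_forall fun ε =>
      varMat_quad_nonneg hρξ ξ u (hPOVM ε).1 (f ε)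
  have htend : Filter.Tendsto (fun ε : ℝ => T + ε * C) l (nhds T) := by
    have h0 : Filter.Tendsto (fun ε : ℝ => T + ε * C) (nhds 0) (nhds (T + 0 * C)) :=
      (continuous_const.add (continuous_id.mul continuous_const)).tendsto 0
    have := h0.mono_left (nhdsWithin_le_nhds (s := Set.Ioi (0:ℝ)))
    simpa using this
  calc Filter.limsup g l ≤ Filter.limsup (fun ε => T + ε * C) l :=
        Filter.limsup_le_limsup hbound
          (Filter.isCoboundedUnder_le_of_eventually_le l hnn)
          htend.isBoundedUnder_le
    _ = T := htend.limsup_eq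
end
end
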